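/- arXiv:2311.01216 — 9 statements merged into one kernel-verified Lean document; each statement's English description precedes it below -/
import Mathlib

section
/- Three-points inequality: let φ : ℝⁿ → ℝ be M-weakly convex for some M ∈ ℝ, let z ∈ ℝⁿ, and let z⁺ ∈ ℝⁿ be a minimizer over ℝⁿ of the function u ↦ φ(u) + (1/2)‖u − z‖². Then for every x ∈ ℝⁿ, φ(x) + (1/2)‖x−z‖² ≥ φ(z⁺) + (1/2)‖z⁺−z‖² + ((1−M)/2)‖x−z⁺‖². -/
open RealInnerProductSpace

lemma quad_identity {n : ℕ} (a b z : EuclideanSpace ℝ (Fin n)) (t : ℝ) :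
    ‖((1-t) • a + t • b) - z‖ ^ 2
      = (1-t) * ‖a - z‖ ^ 2 + t * ‖b - z‖ ^ 2 - t * (1-t) * ‖a - b‖ ^ 2 := by
  have h : ∀ v : EuclideanSpace ℝ (Fin n), ‖v‖ ^ 2 = ⟪v, v⟫ := fun v =>
    (real_inner_self_eq_norm_sq v).symm
  rw [h, h, h, h]
  simp only [inner_sub_left, inner_sub_right, inner_add_left, inner_add_right,
    real_inner_smul_left, real_inner_smul_right]
  rw [real_inner_comm a b, real_inner_comm a z, real_inner_comm b z]
  ring

/-- Three-points inequality: if `φ` is `M`-weakly convex and `z⁺` minimizes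
`u ↦ φ(u) + (1/2)‖u − z‖²` over `ℝⁿ`, then for every `x`,
`φ(x) + (1/2)‖x−z‖² ≥ φ(z⁺) + (1/2)‖z⁺−z‖² + ((1−M)/2)‖x−z⁺‖²`. -/
theorem three_points_inequality {n : ℕ}
    (φ : EuclideanSpace ℝ (Fin n) → ℝ) (M : ℝ)
    (hφ : ConvexOn ℝ Set.univ (fun x => φ x + M / 2 * ‖x‖ ^ 2))
    (z zp : EuclideanSpace ℝ (Fin n))
    (hzp : ∀ u, φ zp + 1 / 2 * ‖zp - z‖ ^ 2 ≤ φ u + 1 / 2 * ‖u - z‖ ^ 2) :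
    ∀ x, φ x + 1 / 2 * ‖x - z‖ ^ 2 ≥
      φ zp + 1 / 2 * ‖zp - z‖ ^ 2 + (1 - M) / 2 * ‖x - zp‖ ^ 2 := by
  intro x
  set Q : ℝ := ‖x - zp‖ ^ 2 with hQdef
  set c : ℝ := (1 - M) / 2 with hcdef
  have hQ0 : 0 ≤ Q := by positivity
  by_cases hc : c * Q ≤ 0
  · have := hzp x; linarith
  push_neg at hc
  have hcpos : 0 < c := by nlinarith
  have hQpos : 0 < Q := by nlinarith
  rw [ge_iff_le]
  apply le_of_forall_pos_le_add
  intro ε hε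
  set t : ℝ := min 1 (ε / (c * Q)) with htdef
  have ht0 : 0 < t := lt_min one_pos (by positivity)
  have ht1 : t ≤ 1 := min_le_left _ _
  have htQ : c * t * Q ≤ ε := by
    have h2 : t ≤ ε / (c * Q) := min_le_right _ _
    have := (le_div_iff₀ (by positivity : (0:ℝ) < c * Q)).mp h2
    nlinarith
  have h2 := hφ.2 (Set.mem_univ zp) (Set.mem_univ x)
    (by linarith : (0:ℝ) ≤ 1 - t) ht0.le (by ring)
  simp only at h2
  have h3 := quad_identity zp x z t
  have h4 := quad_identity zp x 0 t
  simp only [sub_zero] at h4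
  have hnQ : ‖zp - x‖ ^ 2 = Q := by rw [hQdef, norm_sub_rev]
  rw [hnQ] at h3 h4
  have h1 := hzp ((1-t) • zp + t • x)
  -- key: t * ψ(zp) ≤ t * ψ(x) - c * t * (1-t) * Q
  simp only [smul_eq_mul] at h2
  have hkey : φ zp + 1/2 * ‖zp - z‖ ^ 2 + c * (1 - t) * Q
      ≤ φ x + 1/2 * ‖x - z‖ ^ 2 := by
    rw [h3] at h1
    rw [h4] at h2
    rw [← mul_le_mul_iff_right₀ ht0]
    simp only [hcdef]
    nlinarith [h1, h2]
  nlinarith [hkey, htQ, ht0]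
end

section
/- Let g : ℝⁿ → ℝ be differentiable with ∇g L-Lipschitz for some 0 ≤ L < 1, and set D = Id − ∇g. Then for all u, v ∈ ℝⁿ, ‖∇g(u) − ∇g(v)‖ ≤ (L/(1−L))·‖D(u) − D(v)‖. (This expresses that the potential φ with D = Prox_φ has an (L/(1−L))-Lipschitz gradient on the image of D.) -/
open RealInnerProductSpace

/-- for `g` differentiable with `∇g` `L`-Lipschitz, `0 ≤ L < 1`, and
`D = Id − ∇g`, one has `‖∇g(u) − ∇g(v)‖ ≤ (L/(1−L))·‖D(u) − D(v)‖` for all `u, v`. -/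
theorem gradient_lipschitz_on_image {n : ℕ}
    (g : EuclideanSpace ℝ (Fin n) → ℝ)
    (g' : EuclideanSpace ℝ (Fin n) → EuclideanSpace ℝ (Fin n))
    (L : ℝ) (hL0 : 0 ≤ L) (hL1 : L < 1)
    (hg : ∀ x, HasGradientAt g (g' x) x)
    (hlip : ∀ u v, ‖g' u - g' v‖ ≤ L * ‖u - v‖)
    (D : EuclideanSpace ℝ (Fin n) → EuclideanSpace ℝ (Fin n))
    (hD : ∀ x, D x = x - g' x) :
    ∀ u v, ‖g' u - g' v‖ ≤ L / (1 - L) * ‖D u - D v‖ := by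
  intro u v
  have h1L : 0 < 1 - L := by linarith
  have hDuv : D u - D v = (u - v) - (g' u - g' v) := by
    rw [hD, hD]; abel
  have hlow : ‖u - v‖ - ‖g' u - g' v‖ ≤ ‖D u - D v‖ := by
    rw [hDuv]; exact norm_sub_norm_le _ _
  have h1 := hlip u v
  have h2 : (1 - L) * ‖u - v‖ ≤ ‖D u - D v‖ := by nlinarith
  rw [div_mul_eq_mul_div, le_div_iff₀ h1L]
  nlinarith
end

section
/- Proximal characterization of the gradient-step denoiser: let g : ℝⁿ → ℝ be differentiable with ∇g L-Lipschitz for some 0 ≤ L < 1, set D = Id − ∇g, h(x) = (1/2)‖x‖² − g(x), and define φ : ℝⁿ → ℝ by φ(x) = sup_{y ∈ ℝⁿ} ( ⟨x, y⟩ − h(y) ) − (1/2)‖x‖². Then: (a) for every x the supremum is finite (the set {⟨x,y⟩ − h(y) : y ∈ ℝⁿ} is bounded above); (b) φ is (L/(L+1))-weakly convex, i.e. x ↦ φ(x) + (L/(2(L+1)))‖x‖² is convex; (c) for every x ∈ ℝⁿ, D(x) is the unique minimizer over ℝⁿ of u ↦ φ(u) + (1/2)‖u − x‖², i.e. D = Prox_φ.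 -/
open RealInnerProductSpace

lemma descent_lemma_aux {E : Type*} [NormedAddCommGroup E] [InnerProductSpace ℝ E] [CompleteSpace E]
    (g : E → ℝ) (g' : E → E) (L : ℝ) (hL0 : 0 ≤ L)
    (hg : ∀ x, HasGradientAt g (g' x) x)
    (hlip : ∀ u v, ‖g' u - g' v‖ ≤ L * ‖u - v‖) (x y : E) :
    |g y - g x - ⟪g' x, y - x⟫| ≤ L / 2 * ‖y - x‖ ^ 2 := by
  set v := y - x with hv
  have hc : ∀ t : ℝ, HasDerivAt (fun t : ℝ => x + t • v) v t := by
    intro t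
    simpa using ((hasDerivAt_id t).smul_const v).const_add x
  have hgc : ∀ t : ℝ, HasDerivAt (fun t : ℝ => g (x + t • v)) ⟪g' (x + t • v), v⟫ t := by
    intro t
    have := (hg (x + t • v)).hasFDerivAt.comp_hasDerivAt t (hc t)
    simpa [InnerProductSpace.toDual_apply_apply, Function.comp_def] using this
  have hgcont : Continuous g' := by
    have : LipschitzWith L.toNNReal g' := by
      apply LipschitzWith.of_dist_le_mul
      intro a b
      simpa [dist_eq_norm, Real.coe_toNNReal L hL0] using hlip a b
    exact this.continuous
  have hcont : Continuous fun t : ℝ => ⟪g' (x + t • v), v⟫ :=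
    Continuous.inner (hgcont.comp (by continuity)) continuous_const
  have hint : ∫ t in (0:ℝ)..1, ⟪g' (x + t • v), v⟫ = g y - g x := by
    have := intervalIntegral.integral_eq_sub_of_hasDerivAt (a := 0) (b := 1)
      (fun t _ => hgc t) (hcont.intervalIntegrable 0 1)
    simpa [hv] using this
  have key : g y - g x - ⟪g' x, v⟫
      = ∫ t in (0:ℝ)..1, (⟪g' (x + t • v), v⟫ - ⟪g' x, v⟫) := by
    rw [intervalIntegral.integral_sub (hcont.intervalIntegrable 0 1)
      (intervalIntegrable_const), hint]
    simp
  have hbound : ∀ t ∈ Set.uIoc (0:ℝ) 1, |⟪g' (x + t • v), v⟫ - ⟪g' x, v⟫| ≤ L * t * ‖v‖ ^ 2 := by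
    intro t ht
    rw [Set.uIoc_of_le zero_le_one] at ht
    have h1 : ⟪g' (x + t • v), v⟫ - ⟪g' x, v⟫ = ⟪g' (x + t • v) - g' x, v⟫ := by
      rw [inner_sub_left]
    rw [h1]
    calc |⟪g' (x + t • v) - g' x, v⟫| ≤ ‖g' (x + t • v) - g' x‖ * ‖v‖ :=
          abs_real_inner_le_norm _ _
      _ ≤ (L * ‖x + t • v - x‖) * ‖v‖ := by
          gcongr; exacts [hlip _ _]
      _ = L * t * ‖v‖ ^ 2 := by
          rw [add_sub_cancel_left, norm_smul]
          simp [abs_of_nonneg ht.1.le]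
          ring
  have hb : ∀ t ∈ Set.Icc (0:ℝ) 1, |⟪g' (x + t • v), v⟫ - ⟪g' x, v⟫| ≤ L * t * ‖v‖ ^ 2 := by
    intro t ht
    rcases eq_or_lt_of_le ht.1 with h0 | h0
    · have := hbound
      subst h0
      simp
    · exact hbound t (by rw [Set.uIoc_of_le zero_le_one]; exact ⟨h0, ht.2⟩)
  have hfint : IntervalIntegrable (fun t : ℝ => ⟪g' (x + t • v), v⟫ - ⟪g' x, v⟫)
      MeasureTheory.volume 0 1 := by
    apply Continuous.intervalIntegrable; exact hcont.sub continuous_const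
  have hbint : IntervalIntegrable (fun t : ℝ => L * t * ‖v‖ ^ 2) MeasureTheory.volume 0 1 := by
    apply Continuous.intervalIntegrable; continuity
  have hbint' : IntervalIntegrable (fun t : ℝ => -(L * t * ‖v‖ ^ 2)) MeasureTheory.volume 0 1 :=
    hbint.neg
  have h2 : |∫ t in (0:ℝ)..1, (⟪g' (x + t • v), v⟫ - ⟪g' x, v⟫)|
      ≤ ∫ t in (0:ℝ)..1, L * t * ‖v‖ ^ 2 := by
    rw [abs_le]
    constructor
    · have := intervalIntegral.integral_mono_on zero_le_one hbint' hfint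
        (fun t ht => neg_le_of_abs_le (hb t ht))
      rw [intervalIntegral.integral_neg] at this
      linarith
    · exact intervalIntegral.integral_mono_on zero_le_one hfint hbint
        (fun t ht => le_of_abs_le (hb t ht))
  have h3 : ∫ t in (0:ℝ)..1, L * t * ‖v‖ ^ 2 = L / 2 * ‖v‖ ^ 2 := by
    have : (fun t : ℝ => L * t * ‖v‖ ^ 2) = fun t : ℝ => (L * ‖v‖ ^ 2) * t := by
      funext t; ring
    rw [this, intervalIntegral.integral_const_mul, integral_id]
    ring
  rw [key]
  rw [h3] at h2
  exact h2

/-- Proximal characterization of the gradient-step denoiser: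
for `g` differentiable with `∇g` `L`-Lipschitz, `0 ≤ L < 1`, `D = Id − ∇g`,
`h(x) = (1/2)‖x‖² − g(x)` and `φ(x) = sup_y (⟪x,y⟫ − h(y)) − (1/2)‖x‖²`:
(a) for every `x` the supremum is finite;
(b) `φ` is `(L/(L+1))`-weakly convex;
(c) for every `x`, `D(x)` is the unique minimizer of `u ↦ φ(u) + (1/2)‖u − x‖²`. -/
theorem proximal_characterization_gradient_step_denoiser {n : ℕ}
    (g : EuclideanSpace ℝ (Fin n) → ℝ)
    (g' : EuclideanSpace ℝ (Fin n) → EuclideanSpace ℝ (Fin n))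
    (L : ℝ) (hL0 : 0 ≤ L) (hL1 : L < 1)
    (hg : ∀ x, HasGradientAt g (g' x) x)
    (hlip : ∀ u v, ‖g' u - g' v‖ ≤ L * ‖u - v‖)
    (D : EuclideanSpace ℝ (Fin n) → EuclideanSpace ℝ (Fin n))
    (hD : ∀ x, D x = x - g' x)
    (h : EuclideanSpace ℝ (Fin n) → ℝ)
    (hh : ∀ x, h x = 1 / 2 * ‖x‖ ^ 2 - g x)
    (φ : EuclideanSpace ℝ (Fin n) → ℝ)
    (hφ : ∀ x, φ x = (⨆ y, (⟪x, y⟫ - h y)) - 1 / 2 * ‖x‖ ^ 2) :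
    (∀ x, BddAbove (Set.range fun y => ⟪x, y⟫ - h y)) ∧
    ConvexOn ℝ Set.univ (fun x => φ x + L / (L + 1) / 2 * ‖x‖ ^ 2) ∧
    (∀ x : EuclideanSpace ℝ (Fin n),
      (∀ u, φ (D x) + 1 / 2 * ‖D x - x‖ ^ 2 ≤ φ u + 1 / 2 * ‖u - x‖ ^ 2) ∧
      (∀ u, (∀ w, φ u + 1 / 2 * ‖u - x‖ ^ 2 ≤ φ w + 1 / 2 * ‖w - x‖ ^ 2) → u = D x)) := by
  have descent : ∀ x y : EuclideanSpace ℝ (Fin n), |g y - g x - ⟪g' x, y - x⟫| ≤ L / 2 * ‖y - x‖ ^ 2 :=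
    descent_lemma_aux g g' L hL0 hg hlip
  -- (a)
  have bdd : ∀ x : EuclideanSpace ℝ (Fin n), BddAbove (Set.range fun y => ⟪x, y⟫ - h y) := by
    intro x
    refine ⟨g 0 + ‖x + g' 0‖ ^ 2 / (2 * (1 - L)), ?_⟩
    rintro _ ⟨y, rfl⟩
    have hd := descent 0 y
    rw [sub_zero] at hd
    have h1 : g y ≤ g 0 + ⟪g' 0, y⟫ + L / 2 * ‖y‖ ^ 2 := by
      have := (abs_le.1 hd).2; linarith
    have h2 : ⟪x, y⟫ + ⟪g' 0, y⟫ = ⟪x + g' 0, y⟫ := (inner_add_left _ _ _).symm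
    have h3 : ⟪x + g' 0, y⟫ ≤ ‖x + g' 0‖ * ‖y‖ := real_inner_le_norm _ _
    have h4 : ‖x + g' 0‖ * ‖y‖ - (1 - L) / 2 * ‖y‖ ^ 2 ≤ ‖x + g' 0‖ ^ 2 / (2 * (1 - L)) := by
      rw [le_div_iff₀ (by linarith : (0:ℝ) < 2 * (1 - L))]
      nlinarith [sq_nonneg (‖x + g' 0‖ - (1 - L) * ‖y‖)]
    show ⟪x, y⟫ - h y ≤ _
    rw [hh y]
    linarith
  -- basic identity
  have hident : ∀ u y : EuclideanSpace ℝ (Fin n), h y - h u - ⟪D u, y - u⟫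
      = 1 / 2 * ‖y - u‖ ^ 2 - (g y - g u - ⟪g' u, y - u⟫) := by
    intro u y
    rw [hh y, hh u, hD u]
    have e1 : ‖y - u‖ ^ 2 = ‖y‖ ^ 2 - 2 * ⟪y, u⟫ + ‖u‖ ^ 2 := norm_sub_sq_real y u
    have e2 : ⟪u - g' u, y - u⟫ = ⟪u, y - u⟫ - ⟪g' u, y - u⟫ := inner_sub_left _ _ _
    have e3 : ⟪u, y - u⟫ = ⟪u, y⟫ - ⟪u, u⟫ := inner_sub_right _ _ _
    have e4 : ⟪u, u⟫ = ‖u‖ ^ 2 := real_inner_self_eq_norm_sq u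
    have e5 : ⟪y, u⟫ = ⟪u, y⟫ := real_inner_comm u y
    rw [e2, e3, e4]
    rw [e5] at e1
    linarith
  have hgrad : ∀ u y : EuclideanSpace ℝ (Fin n), h u + ⟪D u, y - u⟫ ≤ h y := by
    intro u y
    have hi := hident u y
    have hd := (abs_le.1 (descent u y)).2
    nlinarith [sq_nonneg ‖y - u‖]
  have hdesc_h : ∀ u y : EuclideanSpace ℝ (Fin n), h y ≤ h u + ⟪D u, y - u⟫ + (1 + L) / 2 * ‖y - u‖ ^ 2 := by
    intro u y
    have hi := hident u y
    have hd := (abs_le.1 (descent u y)).1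
    linarith
  -- surjectivity of D
  have hsurj : ∀ z : EuclideanSpace ℝ (Fin n), ∃ u, D u = z := by
    intro z
    have hcw : ContractingWith L.toNNReal (fun u : EuclideanSpace ℝ (Fin n) => z + g' u) := by
      constructor
      · rw [← NNReal.coe_lt_coe]
        simpa [Real.coe_toNNReal L hL0] using hL1
      · apply LipschitzWith.of_dist_le_mul
        intro a b
        simpa [dist_eq_norm, Real.coe_toNNReal L hL0] using hlip a b
    obtain ⟨u, hu, -⟩ := hcw.exists_fixedPoint z (edist_ne_top _ _)
    refine ⟨u, ?_⟩
    have : z + g' u = u := hu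
    rw [hD]
    exact sub_eq_iff_eq_add.2 this.symm
  -- attainment of the sup
  have attain : ∀ u : EuclideanSpace ℝ (Fin n), (⨆ y, ⟪D u, y⟫ - h y) = ⟪D u, u⟫ - h u := by
    intro u
    apply le_antisymm
    · apply ciSup_le
      intro y
      have h1 := hgrad u y
      have e : ⟪D u, y - u⟫ = ⟪D u, y⟫ - ⟪D u, u⟫ := inner_sub_right _ _ _
      linarith
    · exact le_ciSup (bdd (D u)) u
  -- key strong subgradient inequality for the conjugate
  have key : ∀ (x z u : EuclideanSpace ℝ (Fin n)), D u = z →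
      (⨆ y, ⟪z, y⟫ - h y) + ⟪x - z, u⟫ + 1 / (2 * (1 + L)) * ‖x - z‖ ^ 2
        ≤ ⨆ y, ⟪x, y⟫ - h y := by
    intro x z u hu
    have hM0 : (0:ℝ) < 1 + L := by linarith
    set w := u + (1 + L)⁻¹ • (x - z) with hw
    have h1 : ⟪x, w⟫ - h w ≤ ⨆ y, ⟪x, y⟫ - h y := le_ciSup (bdd x) w
    have hwu : w - u = (1 + L)⁻¹ • (x - z) := by rw [hw]; abel
    have e2 : ⟪z, w - u⟫ = (1 + L)⁻¹ * ⟪z, x - z⟫ := by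
      rw [hwu, real_inner_smul_right]
    have e3 : ‖w - u‖ ^ 2 = (1 + L)⁻¹ ^ 2 * ‖x - z‖ ^ 2 := by
      rw [hwu, norm_smul]
      simp [abs_of_pos (inv_pos.2 hM0), mul_pow]
    have h2 : h w ≤ h u + (1 + L)⁻¹ * ⟪z, x - z⟫
        + (1 + L) / 2 * ((1 + L)⁻¹ ^ 2 * ‖x - z‖ ^ 2) := by
      have h2' := hdesc_h u w
      rw [hu, e2, e3] at h2'
      exact h2'
    have e1 : ⟪x, w⟫ = ⟪x, u⟫ + (1 + L)⁻¹ * ⟪x, x - z⟫ := by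
      rw [hw, inner_add_right, real_inner_smul_right]
    have e4 : ⟪x, x - z⟫ - ⟪z, x - z⟫ = ‖x - z‖ ^ 2 := by
      rw [← inner_sub_left, real_inner_self_eq_norm_sq]
    have e5 : ⟪x, u⟫ = ⟪z, u⟫ + ⟪x - z, u⟫ := by
      rw [← inner_add_left]
      congr 1
      abel
    have hSz : (⨆ y, ⟪z, y⟫ - h y) = ⟪z, u⟫ - h u := by rw [← hu, attain u]
    rw [hSz]
    have hfield : (1 + L)⁻¹ * ‖x - z‖ ^ 2
        - (1 + L) / 2 * ((1 + L)⁻¹ ^ 2 * ‖x - z‖ ^ 2)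
        = 1 / (2 * (1 + L)) * ‖x - z‖ ^ 2 := by
      field_simp
      ring
    have efin : (1 + L)⁻¹ * ⟪x, x - z⟫ - (1 + L)⁻¹ * ⟪z, x - z⟫
        = (1 + L)⁻¹ * ‖x - z‖ ^ 2 := by
      rw [← mul_sub, e4]
    linarith
  -- (b) convexity
  have hFeq : ∀ x : EuclideanSpace ℝ (Fin n), φ x + L / (L + 1) / 2 * ‖x‖ ^ 2
      = (⨆ y, ⟪x, y⟫ - h y) - 1 / (2 * (1 + L)) * ‖x‖ ^ 2 := by
    intro x
    rw [hφ x]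
    have hc : L / (L + 1) / 2 - 1 / 2 = -(1 / (2 * (1 + L))) := by
      field_simp
      ring
    linear_combination ‖x‖ ^ 2 * hc
  have convex : ConvexOn ℝ Set.univ (fun x => φ x + L / (L + 1) / 2 * ‖x‖ ^ 2) := by
    refine ⟨convex_univ, ?_⟩
    intro x₁ _ x₂ _ a b ha hb hab
    set z := a • x₁ + b • x₂ with hz
    obtain ⟨u, hu⟩ := hsurj z
    set v := u - (1 + L)⁻¹ • z with hv
    have subgrad : ∀ x : EuclideanSpace ℝ (Fin n),
        (φ z + L / (L + 1) / 2 * ‖z‖ ^ 2) + ⟪x - z, v⟫ ≤ φ x + L / (L + 1) / 2 * ‖x‖ ^ 2 := by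
      intro x
      have k := key x z u hu
      rw [hFeq x, hFeq z]
      have e6 : ‖x‖ ^ 2 = ‖z‖ ^ 2 + 2 * ⟪z, x - z⟫ + ‖x - z‖ ^ 2 := by
        have := norm_add_sq_real z (x - z)
        rw [add_sub_cancel] at this
        exact this
      have e6d : 1 / (2 * (1 + L)) * ‖x‖ ^ 2
          = 1 / (2 * (1 + L)) * ‖z‖ ^ 2 + 2 * (1 / (2 * (1 + L))) * ⟪z, x - z⟫
            + 1 / (2 * (1 + L)) * ‖x - z‖ ^ 2 := by
        linear_combination (1 / (2 * (1 + L))) * e6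
      have e7 : ⟪x - z, v⟫ = ⟪x - z, u⟫ - (1 + L)⁻¹ * ⟪x - z, z⟫ := by
        rw [hv, inner_sub_right, real_inner_smul_right]
      have e8 : ⟪x - z, z⟫ = ⟪z, x - z⟫ := real_inner_comm _ _
      have hd2 : 2 * (1 / (2 * (1 + L))) = (1 + L)⁻¹ := by
        field_simp
      have e9 : 2 * (1 / (2 * (1 + L))) * ⟪z, x - z⟫ = (1 + L)⁻¹ * ⟪z, x - z⟫ := by
        rw [hd2]
      rw [e7, e8]
      linarith
    have s1 := subgrad x₁
    have s2 := subgrad x₂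
    have hzero : a * ⟪x₁ - z, v⟫ + b * ⟪x₂ - z, v⟫ = 0 := by
      rw [← real_inner_smul_left, ← real_inner_smul_left, ← inner_add_left]
      have hcomb : a • (x₁ - z) + b • (x₂ - z) = 0 := by
        have h1 : a • (x₁ - z) + b • (x₂ - z) = (a • x₁ + b • x₂) - (a + b) • z := by
          rw [smul_sub, smul_sub, add_smul]
          abel
        rw [h1, hab, one_smul, ← hz, sub_self]
      rw [hcomb, inner_zero_left]
    have t1 := mul_le_mul_of_nonneg_left s1 ha
    have t2 := mul_le_mul_of_nonneg_left s2 hb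
    simp only [smul_eq_mul]
    have habF : a * (φ z + L / (L + 1) / 2 * ‖z‖ ^ 2) + b * (φ z + L / (L + 1) / 2 * ‖z‖ ^ 2)
        = φ z + L / (L + 1) / 2 * ‖z‖ ^ 2 := by
      rw [← add_mul, hab, one_mul]
    linarith [t1, t2, hzero, habF]
  refine ⟨bdd, convex, fun x => ?_⟩
  -- rewriting of the objective
  have ex1 : ∀ u : EuclideanSpace ℝ (Fin n), φ u + 1 / 2 * ‖u - x‖ ^ 2
      = (⨆ y, ⟪u, y⟫ - h y) - ⟪u, x⟫ + 1 / 2 * ‖x‖ ^ 2 := by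
    intro u
    rw [hφ u]
    have e := norm_sub_sq_real u x
    linarith
  have hDx : (⨆ y, ⟪D x, y⟫ - h y) = ⟪D x, x⟫ - h x := attain x
  have hmin : ∀ u : EuclideanSpace ℝ (Fin n), φ (D x) + 1 / 2 * ‖D x - x‖ ^ 2 ≤ φ u + 1 / 2 * ‖u - x‖ ^ 2 := by
    intro u
    rw [ex1, ex1, hDx]
    have := le_ciSup (bdd u) x
    linarith
  refine ⟨hmin, ?_⟩
  intro u humin
  have h1 : φ u + 1 / 2 * ‖u - x‖ ^ 2 ≤ φ (D x) + 1 / 2 * ‖D x - x‖ ^ 2 := humin (D x)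
  have h2 : (⨆ y, ⟪u, y⟫ - h y) ≤ ⟪u, x⟫ - h x := by
    rw [ex1, ex1, hDx] at h1
    linarith
  have hmax : ∀ y : EuclideanSpace ℝ (Fin n), ⟪u, y⟫ - h y ≤ ⟪u, x⟫ - h x :=
    fun y => le_trans (le_ciSup (bdd u) y) h2
  -- derivative of the maximized function vanishes at x
  have hA : HasFDerivAt (fun y : EuclideanSpace ℝ (Fin n) => ⟪u, y⟫) ((InnerProductSpace.toDual ℝ (EuclideanSpace ℝ (Fin n))) u) x :=
    ((InnerProductSpace.toDual ℝ (EuclideanSpace ℝ (Fin n))) u).hasFDerivAt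
  have hB : HasFDerivAt (fun y : EuclideanSpace ℝ (Fin n) => 1 / 2 * ‖y‖ ^ 2) ((InnerProductSpace.toDual ℝ (EuclideanSpace ℝ (Fin n))) x) x := by
    have hin : HasFDerivAt (fun y : EuclideanSpace ℝ (Fin n) => ⟪y, y⟫)
        ((fderivInnerCLM ℝ (x, x)).comp ((ContinuousLinearMap.id ℝ (EuclideanSpace ℝ (Fin n))).prod
          (ContinuousLinearMap.id ℝ (EuclideanSpace ℝ (Fin n))))) x :=
      (hasFDerivAt_id x).inner ℝ (hasFDerivAt_id x)
    have hB0 := hin.const_mul (1 / 2 : ℝ)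
    have hfun : (fun y : EuclideanSpace ℝ (Fin n) => 1 / 2 * ‖y‖ ^ 2) = fun y : EuclideanSpace ℝ (Fin n) => (1 / 2 : ℝ) * ⟪y, y⟫ := by
      funext y
      rw [real_inner_self_eq_norm_sq]
    rw [hfun]
    refine hB0.congr_fderiv ?_
    apply ContinuousLinearMap.ext
    intro w
    simp only [ContinuousLinearMap.smul_apply, ContinuousLinearMap.coe_comp',
      Function.comp_apply, ContinuousLinearMap.prod_apply, ContinuousLinearMap.coe_id', id_eq,
      fderivInnerCLM_apply, InnerProductSpace.toDual_apply_apply, smul_eq_mul,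
      real_inner_comm w x]
    ring
  have hC := (hg x).hasFDerivAt
  have hψ : HasFDerivAt (fun y : EuclideanSpace ℝ (Fin n) => ⟪u, y⟫ - h y)
      ((InnerProductSpace.toDual ℝ (EuclideanSpace ℝ (Fin n))) (u - (x - g' x))) x := by
    have hhe : (fun y : EuclideanSpace ℝ (Fin n) => ⟪u, y⟫ - h y)
        = fun y : EuclideanSpace ℝ (Fin n) => ⟪u, y⟫ - (1 / 2 * ‖y‖ ^ 2 - g y) := by
      funext y
      rw [hh y]
    rw [hhe, map_sub, map_sub]
    exact hA.sub (hB.sub hC)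
  have hlmax : IsLocalMax (fun y : EuclideanSpace ℝ (Fin n) => ⟪u, y⟫ - h y) x :=
    Filter.Eventually.of_forall hmax
  have hzero := hlmax.hasFDerivAt_eq_zero hψ
  have hz0 : u - (x - g' x) = 0 := by
    have := congrArg (fun f => (InnerProductSpace.toDual ℝ (EuclideanSpace ℝ (Fin n))).symm f) hzero
    simpa using this
  rw [hD]
  rwa [sub_eq_zero] at hz0
end

section
/- Let g : ℝⁿ → ℝ be differentiable with ∇g L-Lipschitz for some 0 ≤ L < 1, set h(x) = (1/2)‖x‖² − g(x) and define φ : ℝⁿ → ℝ by φ(x) = sup_{y ∈ ℝⁿ} ( ⟨x, y⟩ − h(y) ) − (1/2)‖x‖². Then φ(x) ≥ g(x) for all x ∈ ℝⁿ, and if ∇g(x) = 0 (i.e. x is a fixed point of D = Id − ∇g) then φ(x) = g(x). -/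
open RealInnerProductSpace

variable {n : ℕ}

lemma myLineDeriv (g : EuclideanSpace ℝ (Fin n) → ℝ)
    (g' : EuclideanSpace ℝ (Fin n) → EuclideanSpace ℝ (Fin n))
    (hg : ∀ x, HasGradientAt g (g' x) x)
    (x v : EuclideanSpace ℝ (Fin n)) (t : ℝ) :
    HasDerivAt (fun t : ℝ => g (x + t • v)) ⟪g' (x + t • v), v⟫ t := by
  have h1 : HasDerivAt (fun t : ℝ => x + t • v) v t := by
    simpa using ((hasDerivAt_id t).smul_const v).const_add x
  have := ((hg (x + t • v)).hasFDerivAt).comp_hasDerivAt t h1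
  simp at this; exact this

/-- Descent lemma. -/
lemma myDescent (g : EuclideanSpace ℝ (Fin n) → ℝ)
    (g' : EuclideanSpace ℝ (Fin n) → EuclideanSpace ℝ (Fin n))
    (L : ℝ) (hL0 : 0 ≤ L)
    (hg : ∀ x, HasGradientAt g (g' x) x)
    (hlip : ∀ u v, ‖g' u - g' v‖ ≤ L * ‖u - v‖)
    (x y : EuclideanSpace ℝ (Fin n)) :
    g y ≤ g x + ⟪g' x, y - x⟫ + L / 2 * ‖y - x‖ ^ 2 := by
  set v := y - x with hv
  set f : ℝ → ℝ := fun t => g (x + t • v) - t * ⟪g' x, v⟫ - L / 2 * t ^ 2 * ‖v‖ ^ 2 with hf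
  have hder : ∀ t : ℝ, HasDerivAt f
      (⟪g' (x + t • v), v⟫ - ⟪g' x, v⟫ - L * t * ‖v‖ ^ 2) t := by
    intro t
    have h1 := myLineDeriv g g' hg x v t
    have h2 : HasDerivAt (fun t : ℝ => t * ⟪g' x, v⟫) ⟪g' x, v⟫ t := by
      simpa using (hasDerivAt_id t).mul_const (⟪g' x, v⟫ : ℝ)
    have h3 : HasDerivAt (fun t : ℝ => L / 2 * t ^ 2 * ‖v‖ ^ 2) (L * t * ‖v‖ ^ 2) t := by
      have := ((hasDerivAt_pow 2 t).const_mul (L / 2)).mul_const (‖v‖ ^ 2)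
      refine this.congr_deriv ?_
      ring
    exact (h1.sub h2).sub h3
  have hanti : AntitoneOn f (Set.Icc (0:ℝ) 1) := by
    apply antitoneOn_of_deriv_nonpos (convex_Icc 0 1)
    · exact fun t _ => ((hder t).continuousAt).continuousWithinAt
    · intro t ht
      exact (hder t).differentiableAt.differentiableWithinAt
    · intro t ht
      rw [(hder t).deriv]
      have ht0 : (0:ℝ) ≤ t := (Set.mem_Ioo.mp (by simpa using ht)).1.le
      have key : ⟪g' (x + t • v) - g' x, v⟫ ≤ L * t * ‖v‖ ^ 2 := by
        calc ⟪g' (x + t • v) - g' x, v⟫ ≤ ‖g' (x + t • v) - g' x‖ * ‖v‖ :=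
              real_inner_le_norm _ _
          _ ≤ (L * ‖(x + t • v) - x‖) * ‖v‖ := by
              gcongr; exact hlip _ _
          _ = L * t * ‖v‖ ^ 2 := by
              simp [norm_smul, abs_of_nonneg ht0]; ring
      have := inner_sub_left (𝕜 := ℝ) (g' (x + t • v)) (g' x) v
      linarith [key, this.symm, this]
  have h01 : f 1 ≤ f 0 := hanti (by norm_num) (by norm_num) (by norm_num)
  have f0 : f 0 = g x := by simp [hf]
  have f1 : f 1 = g y - ⟪g' x, v⟫ - L / 2 * ‖v‖ ^ 2 := by
    simp [hf, hv]
  rw [f0, f1] at h01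
  linarith

lemma myConv (g : EuclideanSpace ℝ (Fin n) → ℝ)
    (g' : EuclideanSpace ℝ (Fin n) → EuclideanSpace ℝ (Fin n))
    (L : ℝ) (hL1 : L ≤ 1)
    (hg : ∀ x, HasGradientAt g (g' x) x)
    (hlip : ∀ u v, ‖g' u - g' v‖ ≤ L * ‖u - v‖)
    (x y : EuclideanSpace ℝ (Fin n)) :
    1 / 2 * ‖x‖ ^ 2 - g x + ⟪x - g' x, y - x⟫ ≤ 1 / 2 * ‖y‖ ^ 2 - g y := by
  set v := y - x with hv
  set f : ℝ → ℝ := fun t => 1 / 2 * ‖x + t • v‖ ^ 2 - g (x + t • v) - t * ⟪x - g' x, v⟫ with hf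
  have hder : ∀ t : ℝ, HasDerivAt f
      (⟪x + t • v, v⟫ - ⟪g' (x + t • v), v⟫ - ⟪x - g' x, v⟫) t := by
    intro t
    have h1 : HasDerivAt (fun t : ℝ => x + t • v) v t := by
      simpa using ((hasDerivAt_id t).smul_const v).const_add x
    have hn : HasDerivAt (fun t : ℝ => 1 / 2 * ‖x + t • v‖ ^ 2) ⟪x + t • v, v⟫ t := by
      have hi : HasDerivAt (fun t : ℝ => (⟪x + t • v, x + t • v⟫ : ℝ))
          (⟪x + t • v, v⟫ + ⟪v, x + t • v⟫) t := h1.inner ℝ h1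
      have : HasDerivAt (fun t : ℝ => 1 / 2 * (⟪x + t • v, x + t • v⟫ : ℝ))
          (1 / 2 * (⟪x + t • v, v⟫ + ⟪v, x + t • v⟫)) t := hi.const_mul _
      convert this using 2 with s
      · rw [real_inner_self_eq_norm_sq]
      · rw [real_inner_comm v]; ring
    have h2 := myLineDeriv g g' hg x v t
    have h3 : HasDerivAt (fun t : ℝ => t * ⟪x - g' x, v⟫) ⟪x - g' x, v⟫ t := by
      simpa using (hasDerivAt_id t).mul_const (⟪x - g' x, v⟫ : ℝ)
    exact (hn.sub h2).sub h3
  have hmono : MonotoneOn f (Set.Icc (0:ℝ) 1) := by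
    apply monotoneOn_of_deriv_nonneg (convex_Icc 0 1)
    · exact fun t _ => ((hder t).continuousAt).continuousWithinAt
    · intro t ht
      exact (hder t).differentiableAt.differentiableWithinAt
    · intro t ht
      rw [(hder t).deriv]
      have ht0 : (0:ℝ) ≤ t := (Set.mem_Ioo.mp (by simpa using ht)).1.le
      have key : ⟪g' (x + t • v) - g' x, v⟫ ≤ L * t * ‖v‖ ^ 2 := by
        calc ⟪g' (x + t • v) - g' x, v⟫ ≤ ‖g' (x + t • v) - g' x‖ * ‖v‖ :=
              real_inner_le_norm _ _
          _ ≤ (L * ‖(x + t • v) - x‖) * ‖v‖ := by gcongr; exact hlip _ _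
          _ = L * t * ‖v‖ ^ 2 := by simp [norm_smul, abs_of_nonneg ht0]; ring
      have e1 : (⟪x + t • v, v⟫ : ℝ) = ⟪x, v⟫ + t * ‖v‖ ^ 2 := by
        rw [inner_add_left, real_inner_smul_left, real_inner_self_eq_norm_sq]
      have e2 : (⟪x - g' x, v⟫ : ℝ) = ⟪x, v⟫ - ⟪g' x, v⟫ := inner_sub_left _ _ _
      have e3 : (⟪g' (x + t • v) - g' x, v⟫ : ℝ) = ⟪g' (x + t • v), v⟫ - ⟪g' x, v⟫ :=
        inner_sub_left _ _ _
      have hLt : L * t * ‖v‖ ^ 2 ≤ t * ‖v‖ ^ 2 := by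
        nlinarith [mul_nonneg ht0 (sq_nonneg ‖v‖)]
      rw [e1, e2]
      linarith [e3 ▸ key]
  have h01 : f 0 ≤ f 1 := hmono (by norm_num) (by norm_num) (by norm_num)
  have f0 : f 0 = 1 / 2 * ‖x‖ ^ 2 - g x := by simp [hf]
  have f1 : f 1 = 1 / 2 * ‖y‖ ^ 2 - g y - ⟪x - g' x, v⟫ := by simp [hf, hv]
  rw [f0, f1] at h01
  linarith


/-- with `h(x) = (1/2)‖x‖² − g(x)` and
`φ(x) = sup_y (⟪x,y⟫ − h(y)) − (1/2)‖x‖²`, one has `φ(x) ≥ g(x)` for all `x`,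
and `φ(x) = g(x)` whenever `∇g(x) = 0` (i.e. `x` is a fixed point of `D = Id − ∇g`). -/
theorem phi_ge_g_and_eq_at_fixed_points {n : ℕ}
    (g : EuclideanSpace ℝ (Fin n) → ℝ)
    (g' : EuclideanSpace ℝ (Fin n) → EuclideanSpace ℝ (Fin n))
    (L : ℝ) (hL0 : 0 ≤ L) (hL1 : L < 1)
    (hg : ∀ x, HasGradientAt g (g' x) x)
    (hlip : ∀ u v, ‖g' u - g' v‖ ≤ L * ‖u - v‖)
    (h : EuclideanSpace ℝ (Fin n) → ℝ)
    (hh : ∀ x, h x = 1 / 2 * ‖x‖ ^ 2 - g x)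
    (φ : EuclideanSpace ℝ (Fin n) → ℝ)
    (hφ : ∀ x, φ x = (⨆ y, (⟪x, y⟫ - h y)) - 1 / 2 * ‖x‖ ^ 2) :
    (∀ x, φ x ≥ g x) ∧ (∀ x, g' x = 0 → φ x = g x) := by
  constructor
  · intro x
    set M : ℝ := 1 / 2 * ‖x‖ ^ 2 + g x + ‖g' x‖ ^ 2 / (2 * (1 - L)) with hM
    have hb : ∀ y, ⟪x, y⟫ - h y ≤ M := by
      intro y
      rw [hh y]
      have hdes := myDescent g g' L hL0 hg hlip x y
      have hcs : (⟪g' x, y - x⟫ : ℝ) ≤ ‖g' x‖ * ‖y - x‖ := real_inner_le_norm _ _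
      have hns : ‖y - x‖ ^ 2 = ‖y‖ ^ 2 - 2 * ⟪y, x⟫ + ‖x‖ ^ 2 := norm_sub_sq_real y x
      have hix : (⟪x, y⟫ : ℝ) = ⟪y, x⟫ := real_inner_comm y x
      have hL' : (0:ℝ) < 1 - L := by linarith
      have key : ‖g' x‖ * ‖y - x‖ - (1 - L) / 2 * ‖y - x‖ ^ 2 ≤
          ‖g' x‖ ^ 2 / (2 * (1 - L)) := by
        rw [le_div_iff₀ (by linarith : (0:ℝ) < 2 * (1 - L))]
        nlinarith [sq_nonneg (‖g' x‖ - (1 - L) * ‖y - x‖)]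
      rw [hM]
      nlinarith [hdes, hcs, key]
    have hBdd : BddAbove (Set.range fun y => (⟪x, y⟫ : ℝ) - h y) := by
      refine ⟨M, ?_⟩
      rintro _ ⟨y, rfl⟩
      exact hb y
    have hle : (⟪x, x⟫ : ℝ) - h x ≤ ⨆ y, (⟪x, y⟫ : ℝ) - h y := le_ciSup hBdd x
    rw [hφ x]
    rw [hh x, real_inner_self_eq_norm_sq] at hle
    linarith
  · intro x hx
    have hb : ∀ y, (⟪x, y⟫ : ℝ) - h y ≤ ⟪x, x⟫ - h x := by
      intro y
      have hc := myConv g g' L hL1.le hg hlip x y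
      rw [hx, sub_zero] at hc
      have e : (⟪x, y - x⟫ : ℝ) = ⟪x, y⟫ - ⟪x, x⟫ := inner_sub_right _ _ _
      rw [hh x, hh y]
      linarith [e ▸ hc]
    have hBdd : BddAbove (Set.range fun y => (⟪x, y⟫ : ℝ) - h y) := by
      refine ⟨(⟪x, x⟫ : ℝ) - h x, ?_⟩
      rintro _ ⟨y, rfl⟩
      exact hb y
    have hsup : (⨆ y, (⟪x, y⟫ : ℝ) - h y) = ⟪x, x⟫ - h x :=
      le_antisymm (ciSup_le hb) (le_ciSup hBdd x)
    rw [hφ x, hsup, hh x, real_inner_self_eq_norm_sq]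
    ring
end

section
/- Let g : ℝⁿ → ℝ be differentiable with ∇g L-Lipschitz for some 0 ≤ L < 1, set D = Id − ∇g, h(x) = (1/2)‖x‖² − g(x), and define φ : ℝⁿ → ℝ by φ(x) = sup_{y ∈ ℝⁿ} ( ⟨x, y⟩ − h(y) ) − (1/2)‖x‖². Then for every y ∈ ℝⁿ, φ(D(y)) = g(y) − (1/2)‖y − D(y)‖² = g(y) − (1/2)‖∇g(y)‖². -/
open RealInnerProductSpace

section aux

variable {E : Type*} [NormedAddCommGroup E] [InnerProductSpace ℝ E] [CompleteSpace E]

/-- Descent lemma: quadratic upper bound from Lipschitz gradient. -/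
lemma descent_lemma (g : E → ℝ) (g' : E → E) (L : ℝ) (hL0 : 0 ≤ L)
    (hg : ∀ x, HasGradientAt g (g' x) x)
    (hlip : ∀ u v, ‖g' u - g' v‖ ≤ L * ‖u - v‖) (y z : E) :
    g z ≤ g y + ⟪g' y, z - y⟫ + L / 2 * ‖z - y‖ ^ 2 := by
  set v := z - y with hv
  set F : ℝ → ℝ := fun t => g (y + t • v) - t * ⟪g' y, v⟫ - L / 2 * t ^ 2 * ‖v‖ ^ 2 with hF
  have hder : ∀ t : ℝ, HasDerivAt F
      (⟪g' (y + t • v), v⟫ - ⟪g' y, v⟫ - L * t * ‖v‖ ^ 2) t := by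
    intro t
    have hc : HasDerivAt (fun t : ℝ => y + t • v) v t := by
      simpa using ((hasDerivAt_id t).smul_const v).const_add y
    have h1 : HasDerivAt (fun t : ℝ => g (y + t • v)) ⟪g' (y + t • v), v⟫ t := by
      have := ((hg (y + t • v)).hasFDerivAt).comp_hasDerivAt t hc
      exact this
    have h2 : HasDerivAt (fun t : ℝ => t * ⟪g' y, v⟫) ⟪g' y, v⟫ t := by
      simpa using (hasDerivAt_id t).mul_const (⟪g' y, v⟫)
    have h3 : HasDerivAt (fun t : ℝ => L / 2 * t ^ 2 * ‖v‖ ^ 2) (L * t * ‖v‖ ^ 2) t := by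
      have := ((hasDerivAt_pow 2 t).const_mul (L / 2)).mul_const (‖v‖ ^ 2)
      convert this using 1
      · rfl
      · rfl
      · ring
    exact (h1.sub h2).sub h3
  have hanti : AntitoneOn F (Set.Icc (0:ℝ) 1) := by
    apply antitoneOn_of_deriv_nonpos (convex_Icc 0 1)
    · exact fun t _ => (hder t).differentiableAt.continuousAt.continuousWithinAt
    · exact fun t ht => ((hder t).differentiableAt).differentiableWithinAt
    · intro t ht
      rw [interior_Icc] at ht
      rw [(hder t).deriv]
      have hb : ⟪g' (y + t • v) - g' y, v⟫ ≤ L * t * ‖v‖ ^ 2 := by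
        calc ⟪g' (y + t • v) - g' y, v⟫ ≤ ‖g' (y + t • v) - g' y‖ * ‖v‖ :=
              real_inner_le_norm _ _
          _ ≤ (L * ‖(y + t • v) - y‖) * ‖v‖ := by
              gcongr
              exact hlip _ _
          _ = L * t * ‖v‖ ^ 2 := by
              simp [norm_smul, abs_of_nonneg ht.1.le]
              ring
      have : ⟪g' (y + t • v) - g' y, v⟫ = ⟪g' (y + t • v), v⟫ - ⟪g' y, v⟫ := by
        rw [inner_sub_left]
      linarith [hb, this.symm.le]
  have h01 := hanti (Set.left_mem_Icc.2 zero_le_one) (Set.right_mem_Icc.2 zero_le_one)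
    zero_le_one
  have hF0 : F 0 = g y := by simp [hF]
  have hF1 : F 1 = g z - ⟪g' y, v⟫ - L / 2 * ‖v‖ ^ 2 := by
    simp [hF, hv]
  rw [hF0, hF1] at h01
  linarith

end aux

/-- with `D = Id − ∇g`, `h(x) = (1/2)‖x‖² − g(x)` and
`φ(x) = sup_y (⟪x,y⟫ − h(y)) − (1/2)‖x‖²`, for every `y`,
`φ(D(y)) = g(y) − (1/2)‖y − D(y)‖² = g(y) − (1/2)‖∇g(y)‖²`. -/
theorem phi_on_image_of_denoiser {n : ℕ}
    (g : EuclideanSpace ℝ (Fin n) → ℝ)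
    (g' : EuclideanSpace ℝ (Fin n) → EuclideanSpace ℝ (Fin n))
    (L : ℝ) (hL0 : 0 ≤ L) (hL1 : L < 1)
    (hg : ∀ x, HasGradientAt g (g' x) x)
    (hlip : ∀ u v, ‖g' u - g' v‖ ≤ L * ‖u - v‖)
    (D : EuclideanSpace ℝ (Fin n) → EuclideanSpace ℝ (Fin n))
    (hD : ∀ x, D x = x - g' x)
    (h : EuclideanSpace ℝ (Fin n) → ℝ)
    (hh : ∀ x, h x = 1 / 2 * ‖x‖ ^ 2 - g x)
    (φ : EuclideanSpace ℝ (Fin n) → ℝ)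
    (hφ : ∀ x, φ x = (⨆ y, (⟪x, y⟫ - h y)) - 1 / 2 * ‖x‖ ^ 2) :
    ∀ y, φ (D y) = g y - 1 / 2 * ‖y - D y‖ ^ 2 ∧
         φ (D y) = g y - 1 / 2 * ‖g' y‖ ^ 2 := by
  intro y
  have key : ∀ z, ⟪D y, z⟫ - h z ≤ ⟪D y, y⟫ - h y := by
    intro z
    have hdes := descent_lemma g g' L hL0 hg hlip y z
    have hDy : D y = y - g' y := hD y
    have h1 : ⟪D y, z⟫ = ⟪D y, y⟫ + ⟪y - g' y, z - y⟫ := by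
      rw [hDy, ← inner_add_right]
      congr 1
      abel
    have h2 : ⟪y - g' y, z - y⟫ = ⟪y, z - y⟫ - ⟪g' y, z - y⟫ := inner_sub_left _ _ _
    have h3 : ‖z‖ ^ 2 = ‖y‖ ^ 2 + 2 * ⟪y, z - y⟫ + ‖z - y‖ ^ 2 := by
      have := norm_add_sq_real y (z - y)
      simpa using this
    have h4 : L / 2 * ‖z - y‖ ^ 2 ≤ 1 / 2 * ‖z - y‖ ^ 2 := by
      have : (0:ℝ) ≤ ‖z - y‖ ^ 2 := sq_nonneg _
      nlinarith
    rw [hh z, hh y, h1, h2]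
    nlinarith
  have hsup : (⨆ z, (⟪D y, z⟫ - h z)) = ⟪D y, y⟫ - h y := by
    apply le_antisymm
    · exact ciSup_le key
    · exact le_ciSup ⟨⟪D y, y⟫ - h y, fun x ⟨z, hz⟩ => hz ▸ key z⟩ y
  have hDy : D y = y - g' y := hD y
  have hsub : y - D y = g' y := by rw [hDy]; abel
  have hnorm : ‖D y‖ ^ 2 = ‖y‖ ^ 2 - 2 * ⟪y, g' y⟫ + ‖g' y‖ ^ 2 := by
    rw [hDy]; exact norm_sub_sq_real y (g' y)
  have hinner : ⟪D y, y⟫ = ‖y‖ ^ 2 - ⟪g' y, y⟫ := by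
    rw [hDy, inner_sub_left, real_inner_self_eq_norm_sq]
  have hcomm : ⟪g' y, y⟫ = ⟪y, g' y⟫ := real_inner_comm _ _
  constructor
  · rw [hφ, hsup, hinner, hh y, hsub, hnorm, hcomm]; ring
  · rw [hφ, hsup, hinner, hh y, hnorm, hcomm]; ring
end

section
/- Finite length and rate for proximal gradient descent: let f : ℝⁿ → ℝ be differentiable with ∇f L_f-Lipschitz and bounded below, let φ : ℝⁿ → ℝ be M-weakly convex (M ∈ ℝ) and bounded below, let F = f + φ and F* a lower bound of F, and let 0 < τ < 2/(M + L_f). Let (x_k) be a sequence such that for each k, x_{k+1} minimizes u ↦ φ(u) + (1/(2τ))‖u − (x_k − τ·∇f(x_k))‖² over ℝⁿ. Then Σ_{k=0}^∞ ‖x_{k+1} − x_k‖² ≤ (F(x_0) − F*)/(1/τ − (M + L_f)/2) < ∞, and for every K ≥ 1, min_{0 ≤ k < K} ‖x_{k+1} − x_k‖² ≤ (1/K)·(F(x_0) − F*)/(1/τ − (M + L_f)/2). -/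
open RealInnerProductSpace

lemma lipschitz_descent {E : Type*} [NormedAddCommGroup E] [InnerProductSpace ℝ E]
    [CompleteSpace E] (f : E → ℝ) (f' : E → E) (L : ℝ)
    (hf : ∀ x, HasGradientAt f (f' x) x)
    (hlip : ∀ u v, ‖f' u - f' v‖ ≤ L * ‖u - v‖) (u v : E) :
    f v ≤ f u + ⟪f' u, v - u⟫ + L / 2 * ‖v - u‖ ^ 2 := by
  set d := v - u with hd
  have hc : ∀ t : ℝ, HasDerivAt (fun t : ℝ => f (u + t • d)) ⟪f' (u + t • d), d⟫ t := by
    intro t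
    have h1 : HasDerivAt (fun t : ℝ => u + t • d) d t := by
      simpa using ((hasDerivAt_id t).smul_const d).const_add u
    have h2 := (hf (u + t • d)).hasFDerivAt.comp_hasDerivAt t h1
    simpa [InnerProductSpace.toDual_apply_apply, Function.comp_def] using h2
  set h : ℝ → ℝ := fun t => f (u + t • d) - t * ⟪f' u, d⟫ - L / 2 * t ^ 2 * ‖d‖ ^ 2 with hh
  have hderiv : ∀ t : ℝ,
      HasDerivAt h (⟪f' (u + t • d), d⟫ - ⟪f' u, d⟫ - L * t * ‖d‖ ^ 2) t := by
    intro t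
    have h3 : HasDerivAt (fun t : ℝ => L / 2 * t ^ 2 * ‖d‖ ^ 2) (L / 2 * (2 * t ^ 1) * ‖d‖ ^ 2) t :=
      (((hasDerivAt_pow 2 t).const_mul (L / 2)).mul_const (‖d‖ ^ 2))
    have h4 : HasDerivAt (fun t : ℝ => t * ⟪f' u, d⟫) ⟪f' u, d⟫ t := hasDerivAt_mul_const _
    have := ((hc t).sub h4).sub h3
    exact this.congr_deriv (by ring)
  have hmono : h 1 ≤ h 0 := by
    have hanti : AntitoneOn h (Set.Icc 0 1) := by
      apply antitoneOn_of_deriv_nonpos (convex_Icc 0 1)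
      · exact fun t _ => ((hderiv t).continuousAt).continuousWithinAt
      · exact fun t _ => ((hderiv t).differentiableAt).differentiableWithinAt
      · intro t ht
        rw [interior_Icc, Set.mem_Ioo] at ht
        rw [(hderiv t).deriv]
        have e1 : (u + t • d) - u = t • d := by abel
        have h5 := hlip (u + t • d) u
        rw [e1, norm_smul, Real.norm_eq_abs, abs_of_pos ht.1] at h5
        have h6 : ⟪f' (u + t • d) - f' u, d⟫ ≤ ‖f' (u + t • d) - f' u‖ * ‖d‖ :=
          real_inner_le_norm _ _
        have h7 : ‖f' (u + t • d) - f' u‖ * ‖d‖ ≤ L * (t * ‖d‖) * ‖d‖ :=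
          mul_le_mul_of_nonneg_right h5 (norm_nonneg _)
        rw [inner_sub_left] at h6
        nlinarith [h6, h7]
    exact hanti (Set.left_mem_Icc.mpr zero_le_one) (Set.right_mem_Icc.mpr zero_le_one) zero_le_one
  have e2 : u + (1 : ℝ) • d = v := by rw [one_smul, hd]; abel
  simp only [hh, e2, one_pow, one_mul, zero_smul, add_zero, zero_mul, zero_pow, mul_zero,
    sub_zero, pow_two, zero_mul] at hmono
  linarith

lemma combo_norm_sq {E : Type*} [NormedAddCommGroup E] [InnerProductSpace ℝ E]
    (x y : E) (t : ℝ) :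
    ‖t • x + (1 - t) • y‖ ^ 2 = t * ‖x‖ ^ 2 + (1 - t) * ‖y‖ ^ 2 - t * (1 - t) * ‖x - y‖ ^ 2 := by
  rw [norm_add_sq_real, norm_sub_sq_real, real_inner_smul_left, real_inner_smul_right,
    norm_smul, norm_smul, mul_pow, mul_pow, Real.norm_eq_abs, Real.norm_eq_abs, sq_abs, sq_abs]
  ring

lemma prox_strong {E : Type*} [NormedAddCommGroup E] [InnerProductSpace ℝ E]
    (φ : E → ℝ) (M τ : ℝ) (hτ : 0 < τ)
    (hφ : ConvexOn ℝ Set.univ (fun x => φ x + M / 2 * ‖x‖ ^ 2))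
    (z p : E) (hp : ∀ u, φ p + 1 / (2 * τ) * ‖p - z‖ ^ 2 ≤ φ u + 1 / (2 * τ) * ‖u - z‖ ^ 2)
    (u : E) :
    φ p + 1 / (2 * τ) * ‖p - z‖ ^ 2 + (1 / τ - M) / 2 * ‖u - p‖ ^ 2 ≤
      φ u + 1 / (2 * τ) * ‖u - z‖ ^ 2 := by
  have hτ' : τ ≠ 0 := ne_of_gt hτ
  set a : ℝ := (1 / τ - M) / 2 with ha
  set X : ℝ := ‖u - p‖ ^ 2 with hX
  have key_t : ∀ t : ℝ, 0 < t → t ≤ 1 →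
      (φ p + 1 / (2 * τ) * ‖p - z‖ ^ 2) + (a * X - t * (a * X)) ≤
        φ u + 1 / (2 * τ) * ‖u - z‖ ^ 2 := by
    intro t ht ht1
    set w : E := t • u + (1 - t) • p with hw
    have hconv := hφ.2 (Set.mem_univ u) (Set.mem_univ p) (le_of_lt ht) (by linarith)
      (by ring : t + (1 - t) = 1)
    simp only [smul_eq_mul] at hconv
    have hq2 := combo_norm_sq u p t
    have hq1 : ‖w - z‖ ^ 2 =
        t * ‖u - z‖ ^ 2 + (1 - t) * ‖p - z‖ ^ 2 - t * (1 - t) * X := by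
      have e : w - z = t • (u - z) + (1 - t) • (p - z) := by
        rw [hw]; module
      rw [e, combo_norm_sq, hX]
      congr 3
      abel_nf
    have heq : (t * (φ u + 1 / (2 * τ) * ‖u - z‖ ^ 2)
          + (1 - t) * (φ p + 1 / (2 * τ) * ‖p - z‖ ^ 2) - a * t * (1 - t) * X)
        - (φ w + 1 / (2 * τ) * ‖w - z‖ ^ 2)
        = (t * (φ u + M / 2 * ‖u‖ ^ 2) + (1 - t) * (φ p + M / 2 * ‖p‖ ^ 2))
        - (φ w + M / 2 * ‖w‖ ^ 2) := by
      rw [hq1, hw, hq2, ha, hX]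
      field_simp
      ring
    have hchain : (φ p + 1 / (2 * τ) * ‖p - z‖ ^ 2) ≤
        t * (φ u + 1 / (2 * τ) * ‖u - z‖ ^ 2)
          + (1 - t) * (φ p + 1 / (2 * τ) * ‖p - z‖ ^ 2) - a * t * (1 - t) * X :=
      (hp w).trans (by linarith [hconv, heq])
    have h3 : t * ((φ p + 1 / (2 * τ) * ‖p - z‖ ^ 2) + (a * X - t * (a * X))) ≤
        t * (φ u + 1 / (2 * τ) * ‖u - z‖ ^ 2) := by nlinarith [hchain]
    exact le_of_mul_le_mul_left h3 ht
  have hmin := hp u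
  rcases le_or_gt (a * X) 0 with hB | hB
  · linarith
  · refine le_of_forall_pos_le_add ?_
    intro ε hε
    set t : ℝ := min 1 (ε / (a * X)) with htdef
    have ht : 0 < t := lt_min one_pos (div_pos hε hB)
    have ht1 : t ≤ 1 := min_le_left _ _
    have hkey := key_t t ht ht1
    have htB : t * (a * X) ≤ ε := by
      rw [← le_div_iff₀ hB]
      exact min_le_right _ _
    linarith


/-- Finite length and rate for proximal gradient descent: with `f`
differentiable, `∇f` `L_f`-Lipschitz, `f` bounded below, `φ` `M`-weakly convex and bounded
below, `F = f + φ` with lower bound `F*`, `0 < τ` with `τ·(M + L_f) < 2` (i.e.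
`τ < 2/(M+L_f)`), and `(x_k)` the PGD iterates, one has
`Σ_k ‖x_{k+1} − x_k‖² ≤ (F(x_0) − F*)/(1/τ − (M + L_f)/2) < ∞` and for every `K ≥ 1`
there is `k < K` with `‖x_{k+1} − x_k‖² ≤ (1/K)·(F(x_0) − F*)/(1/τ − (M + L_f)/2)`. -/
theorem pgd_finite_length_and_rate {n : ℕ}
    (f : EuclideanSpace ℝ (Fin n) → ℝ)
    (f' : EuclideanSpace ℝ (Fin n) → EuclideanSpace ℝ (Fin n))
    (φ : EuclideanSpace ℝ (Fin n) → ℝ) (M L_f τ Fstar : ℝ)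
    (hf : ∀ x, HasGradientAt f (f' x) x)
    (hlip : ∀ u v, ‖f' u - f' v‖ ≤ L_f * ‖u - v‖)
    (hfbd : ∃ c, ∀ x, c ≤ f x)
    (hφ : ConvexOn ℝ Set.univ (fun x => φ x + M / 2 * ‖x‖ ^ 2))
    (hφbd : ∃ c, ∀ x, c ≤ φ x)
    (hτ : 0 < τ) (hτ2 : τ * (M + L_f) < 2)
    (F : EuclideanSpace ℝ (Fin n) → ℝ) (hF : ∀ x, F x = f x + φ x)
    (hFstar : ∀ x, Fstar ≤ F x)
    (x : ℕ → EuclideanSpace ℝ (Fin n))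
    (hx : ∀ k, ∀ u,
      φ (x (k + 1)) + 1 / (2 * τ) * ‖x (k + 1) - (x k - τ • f' (x k))‖ ^ 2 ≤
        φ u + 1 / (2 * τ) * ‖u - (x k - τ • f' (x k))‖ ^ 2) :
    Summable (fun k => ‖x (k + 1) - x k‖ ^ 2) ∧
    (∑' k : ℕ, ‖x (k + 1) - x k‖ ^ 2) ≤
      (F (x 0) - Fstar) / (1 / τ - (M + L_f) / 2) ∧
    (∀ K : ℕ, 1 ≤ K → ∃ k < K,
      ‖x (k + 1) - x k‖ ^ 2 ≤
        (1 / (K : ℝ)) * ((F (x 0) - Fstar) / (1 / τ - (M + L_f) / 2))) := by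
  have hτ' : τ ≠ 0 := ne_of_gt hτ
  set D : ℝ := 1 / τ - (M + L_f) / 2 with hD
  have hDpos : 0 < D := by
    rw [hD, sub_pos, div_lt_div_iff₀ two_pos hτ]
    linarith
  -- key per-step inequality
  have key : ∀ k, F (x (k + 1)) + D * ‖x (k + 1) - x k‖ ^ 2 ≤ F (x k) := by
    intro k
    set z : EuclideanSpace ℝ (Fin n) := x k - τ • f' (x k) with hz
    set g : EuclideanSpace ℝ (Fin n) := f' (x k) with hg
    set d : EuclideanSpace ℝ (Fin n) := x (k + 1) - x k with hd
    have sp := prox_strong φ M τ hτ hφ z (x (k + 1)) (hx k) (x k)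
    have h1 : ‖x (k + 1) - z‖ ^ 2 = ‖d‖ ^ 2 + 2 * τ * ⟪d, g⟫ + τ ^ 2 * ‖g‖ ^ 2 := by
      have e : x (k + 1) - z = d + τ • g := by rw [hz, hd]; module
      rw [e, norm_add_sq_real, real_inner_smul_right, norm_smul, mul_pow, Real.norm_eq_abs,
        sq_abs]
      ring
    have h2 : ‖x k - z‖ ^ 2 = τ ^ 2 * ‖g‖ ^ 2 := by
      have e : x k - z = τ • g := by rw [hz]; module
      rw [e, norm_smul, mul_pow, Real.norm_eq_abs, sq_abs]
    have h3 : ‖x k - x (k + 1)‖ ^ 2 = ‖d‖ ^ 2 := by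
      rw [hd, ← norm_neg]; congr 1; abel
    rw [h1, h2, h3] at sp
    have hdesc := lipschitz_descent f f' L_f hf hlip (x k) (x (k + 1))
    rw [← hd, real_inner_comm] at hdesc
    have hexp : 1 / (2 * τ) * (‖d‖ ^ 2 + 2 * τ * ⟪d, g⟫ + τ ^ 2 * ‖g‖ ^ 2)
        = 1 / (2 * τ) * ‖d‖ ^ 2 + ⟪d, g⟫ + 1 / (2 * τ) * (τ ^ 2 * ‖g‖ ^ 2) := by
      field_simp
    have hcoef : 1 / (2 * τ) + (1 / τ - M) / 2 - L_f / 2 = D := by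
      rw [hD]; field_simp; ring
    rw [hexp] at sp
    rw [← hg] at hdesc
    have hcoef2 : 1 / (2 * τ) * ‖d‖ ^ 2 + (1 / τ - M) / 2 * ‖d‖ ^ 2 - L_f / 2 * ‖d‖ ^ 2
        = D * ‖d‖ ^ 2 := by
      rw [hD]; field_simp; ring
    rw [hF, hF]
    clear_value D z g d; linarith [sp, hdesc, hcoef2]
  -- telescoping
  have tele : ∀ K : ℕ, D * ∑ k ∈ Finset.range K, ‖x (k + 1) - x k‖ ^ 2 ≤ F (x 0) - F (x K) := by
    intro K
    induction K with
    | zero => simp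
    | succ K ih =>
      rw [Finset.sum_range_succ, mul_add]
      have := key K
      linarith
  set C : ℝ := (F (x 0) - Fstar) / D with hC
  have bound : ∀ K : ℕ, ∑ k ∈ Finset.range K, ‖x (k + 1) - x k‖ ^ 2 ≤ C := by
    intro K
    rw [hC, le_div_iff₀ hDpos]
    have := tele K
    have := hFstar (x K)
    nlinarith
  refine ⟨summable_of_sum_range_le (fun k => sq_nonneg _) bound,
    Real.tsum_le_of_sum_range_le (fun k => sq_nonneg _) bound, ?_⟩
  intro K hK
  by_contra hcon
  push_neg at hcon
  have hKpos : (0 : ℝ) < (K : ℝ) := by exact_mod_cast hK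
  have hlt : ∑ k ∈ Finset.range K, (1 / (K : ℝ) * C) <
      ∑ k ∈ Finset.range K, ‖x (k + 1) - x k‖ ^ 2 := by
    apply Finset.sum_lt_sum_of_nonempty (Finset.nonempty_range_iff.mpr (by omega))
    intro i hi
    exact hcon i (Finset.mem_range.mp hi)
  rw [Finset.sum_const, Finset.card_range, nsmul_eq_mul] at hlt
  have hKC : (K : ℝ) * (1 / (K : ℝ) * C) = C := by field_simp
  rw [hKC] at hlt
  exact absurd (bound K) (not_le.mpr hlt)
end

section
/- Finite length and rate for αPGD: let f : ℝⁿ → ℝ be convex, differentiable with ∇f L_f-Lipschitz, and bounded below; let φ : ℝⁿ → ℝ be M-weakly convex with M ≥ 0 and bounded below; let α ∈ (0,1) and τ > 0 satisfy τ < min(1/(α·L_f), α/M); set F = f + φ with lower bound F*. Let (q_k), (x_k), (y_k) satisfy, for all k ≥ 0: q_{k+1} = (1−α)y_k + α·x_k; x_{k+1} a minimizer over ℝⁿ of u ↦ φ(u) + (1/(2τ))‖u − (x_k − τ·∇f(q_{k+1}))‖²; y_{k+1} = (1−α)y_k + α·x_{k+1}. Set δ = (α/(2τ))(1 − 1/α)²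 and γ = (1/α)(1/(2τ) − M(2−α)/2). Then γ − δ > 0, Σ_{k=1}^∞ ‖y_{k+1} − y_k‖² ≤ (F(y_1) + δ‖y_1 − y_0‖² − F*)/(γ − δ) < ∞, and for every K ≥ 1, min_{1 ≤ k ≤ K} ‖y_{k+1} − y_k‖² ≤ (1/K)·(F(y_1) + δ‖y_1 − y_0‖² − F*)/(γ − δ). -/
open RealInnerProductSpace

section Aux
open Set

variable {H : Type*} [NormedAddCommGroup H] [InnerProductSpace ℝ H] [CompleteSpace H]

lemma line_hasDerivAt {f : H → ℝ} {f' : H → H} (hf : ∀ x, HasGradientAt f (f' x) x)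
    (a v : H) (t : ℝ) :
    HasDerivAt (fun s : ℝ => f (a + s • v)) ⟪f' (a + t • v), v⟫ t := by
  have hc : HasDerivAt (fun s : ℝ => a + s • v) v t := by
    simpa using ((hasDerivAt_id t).smul_const v).const_add a
  have := ((hf (a + t • v)).hasFDerivAt.comp_hasDerivAt t hc)
  simpa [InnerProductSpace.toDual_apply_apply, Function.comp_def] using this

lemma grad_convex_ineq {f : H → ℝ} {f' : H → H}
    (hf : ∀ x, HasGradientAt f (f' x) x) (hconv : ConvexOn ℝ Set.univ f)
    (a b : H) : f a + ⟪f' a, b - a⟫ ≤ f b := by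
  set v := b - a with hv
  have hcomp : ConvexOn ℝ Set.univ (fun t : ℝ => f (a + t • v)) := by
    have h := hconv.comp_affineMap (AffineMap.lineMap a b)
    have he : (fun t : ℝ => f (a + t • v)) = (f ∘ (AffineMap.lineMap a b)) := by
      funext t; simp [AffineMap.lineMap_apply, hv]; congr 1; abel
    rw [he]
    simpa using h
  have hd : HasDerivAt (fun s : ℝ => f (a + s • v)) ⟪f' a, v⟫ 0 := by
    have := line_hasDerivAt hf a v 0
    simpa using this
  have hs := hcomp.le_slope_of_hasDerivAt (mem_univ (0:ℝ)) (mem_univ (1:ℝ)) one_pos hd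
  rw [slope_def_field] at hs
  have hb : a + (1:ℝ) • v = b := by rw [hv]; simp
  have ha : a + (0:ℝ) • v = a := by simp
  rw [hb, ha] at hs
  have : ⟪f' a, v⟫ ≤ f b - f a := by
    calc ⟪f' a, v⟫ ≤ (f b - f a) / (1 - 0) := hs
    _ = f b - f a := by norm_num
  linarith

lemma descent_lemma_s13 {f : H → ℝ} {f' : H → H} {L : ℝ}
    (hf : ∀ x, HasGradientAt f (f' x) x)
    (hlip : ∀ u v, ‖f' u - f' v‖ ≤ L * ‖u - v‖)
    (a b : H) : f b ≤ f a + ⟪f' a, b - a⟫ + L / 2 * ‖b - a‖ ^ 2 := by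
  set v := b - a with hv
  set ψ : ℝ → ℝ := fun t => f (a + t • v) - t * ⟪f' a, v⟫ - t ^ 2 * (L / 2 * ‖v‖ ^ 2) with hψ
  have hdψ : ∀ t : ℝ, HasDerivAt ψ
      (⟪f' (a + t • v), v⟫ - ⟪f' a, v⟫ - 2 * t * (L / 2 * ‖v‖ ^ 2)) t := by
    intro t
    have h1 := line_hasDerivAt hf a v t
    have h2 : HasDerivAt (fun s : ℝ => s * ⟪f' a, v⟫) ⟪f' a, v⟫ t := by
      simpa using (hasDerivAt_id t).mul_const ⟪f' a, v⟫
    have h3 : HasDerivAt (fun s : ℝ => s ^ 2 * (L / 2 * ‖v‖ ^ 2))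
        (2 * t * (L / 2 * ‖v‖ ^ 2)) t := by
      have := (hasDerivAt_pow 2 t).mul_const (L / 2 * ‖v‖ ^ 2)
      simpa [mul_comm] using this
    exact (h1.sub h2).sub h3
  have hmono : AntitoneOn ψ (Icc (0:ℝ) 1) := by
    apply antitoneOn_of_deriv_nonpos (convex_Icc 0 1)
    · exact fun t _ => ((hdψ t).differentiableAt).continuousAt.continuousWithinAt
    · intro t ht
      exact ((hdψ t).differentiableAt).differentiableWithinAt
    · intro t ht
      rw [interior_Icc] at ht
      rw [(hdψ t).deriv]
      have hL : ‖f' (a + t • v) - f' a‖ ≤ L * ‖t • v‖ := by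
        have := hlip (a + t • v) a
        simpa using this
      have hn : ‖t • v‖ = t * ‖v‖ := by
        rw [norm_smul, Real.norm_eq_abs, abs_of_pos ht.1]
      have key : ⟪f' (a + t • v), v⟫ - ⟪f' a, v⟫ ≤ L * t * ‖v‖ * ‖v‖ := by
        calc ⟪f' (a + t • v), v⟫ - ⟪f' a, v⟫ = ⟪f' (a + t • v) - f' a, v⟫ := by
              rw [inner_sub_left]
          _ ≤ ‖f' (a + t • v) - f' a‖ * ‖v‖ := real_inner_le_norm _ _
          _ ≤ L * ‖t • v‖ * ‖v‖ := mul_le_mul_of_nonneg_right hL (norm_nonneg v)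
          _ = L * t * ‖v‖ * ‖v‖ := by rw [hn]; ring
      nlinarith [key]
  have h01 : ψ 1 ≤ ψ 0 := hmono (by norm_num) (by norm_num) (by norm_num)
  have hb : a + (1:ℝ) • v = b := by rw [hv]; simp
  simp only [hψ, hb, one_pow, one_mul, zero_smul, add_zero, zero_mul, sub_zero,
    mul_zero] at h01
  have hz : ((0:ℝ)) ^ 2 * (L / 2 * ‖v‖ ^ 2) = 0 := by norm_num
  rw [hz] at h01
  linarith


/-- the parallelogram-type identity for convex combinations -/
lemma comb_norm_sq (a : ℝ) (p u : H) :
    ‖(1 - a) • p + a • u‖ ^ 2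
      = (1 - a) * ‖p‖ ^ 2 + a * ‖u‖ ^ 2 - a * (1 - a) * ‖u - p‖ ^ 2 := by
  have h1 : ‖(1 - a) • p + a • u‖ ^ 2
      = (1-a)^2 * ‖p‖^2 + 2 * ((1-a) * a * ⟪p, u⟫) + a^2 * ‖u‖^2 := by
    rw [norm_add_sq_real, norm_smul, norm_smul, real_inner_smul_left, real_inner_smul_right]
    simp [Real.norm_eq_abs, mul_pow, sq_abs]
    ring
  have h2 : ‖u - p‖ ^ 2 = ‖u‖^2 - 2 * ⟪u, p⟫ + ‖p‖^2 := norm_sub_sq_real u p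
  have h3 : ⟪u, p⟫ = ⟪p, u⟫ := (real_inner_comm u p).symm
  rw [h1, h2, h3]; ring

/-- weakly convex combination inequality -/
lemma weak_convex_comb {φ : H → ℝ} {M : ℝ}
    (hφ : ConvexOn ℝ Set.univ (fun x => φ x + M / 2 * ‖x‖ ^ 2))
    {a : ℝ} (ha0 : 0 ≤ a) (ha1 : a ≤ 1) (p u : H) :
    φ ((1 - a) • p + a • u)
      ≤ (1 - a) * φ p + a * φ u + M / 2 * (a * (1 - a)) * ‖u - p‖ ^ 2 := by
  have h := hφ.2 (mem_univ p) (mem_univ u) (by linarith : (0:ℝ) ≤ 1 - a) ha0 (by ring)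
  simp only [smul_eq_mul] at h
  rw [comb_norm_sq a p u] at h
  ring_nf at h ⊢
  linarith

/-- strong minimality from weak convexity -/
lemma strong_min {φ : H → ℝ} {M τ : ℝ} (hτ : 0 < τ)
    (hφ : ConvexOn ℝ Set.univ (fun x => φ x + M / 2 * ‖x‖ ^ 2))
    (p z : H)
    (hmin : ∀ u, φ p + 1 / (2 * τ) * ‖p - z‖ ^ 2 ≤ φ u + 1 / (2 * τ) * ‖u - z‖ ^ 2)
    (u : H) :
    φ p + 1 / (2 * τ) * ‖p - z‖ ^ 2 + (1 / (2 * τ) - M / 2) * ‖u - p‖ ^ 2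
      ≤ φ u + 1 / (2 * τ) * ‖u - z‖ ^ 2 := by
  set A := φ p + 1 / (2 * τ) * ‖p - z‖ ^ 2 with hA
  set B := φ u + 1 / (2 * τ) * ‖u - z‖ ^ 2 with hB
  set c := (1 / (2 * τ) - M / 2) with hc
  set d := ‖u - p‖ ^ 2 with hd
  have key : ∀ t : ℝ, 0 < t → t ≤ 1 → A + c * ((1 - t) * d) ≤ B := by
    intro t ht0 ht1
    set w := (1 - t) • p + t • u with hw
    have hφw : φ w ≤ (1 - t) * φ p + t * φ u + M / 2 * (t * (1 - t)) * d := by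
      exact weak_convex_comb hφ (le_of_lt ht0) ht1 p u
    have hnw : ‖w - z‖ ^ 2 = (1 - t) * ‖p - z‖^2 + t * ‖u - z‖^2 - t * (1-t) * d := by
      have : w - z = (1 - t) • (p - z) + t • (u - z) := by
        rw [hw]; module
      rw [this, comb_norm_sq]
      have : (u - z) - (p - z) = u - p := by abel
      rw [this]
    have hm := hmin w
    have htau : 0 < 1 / (2 * τ) := by positivity
    -- A ≤ φ w + 1/(2τ)‖w−z‖² ≤ (1−t) A + t B − c t (1−t) d
    have hcomb : A ≤ (1 - t) * A + t * B + c * (- (t * (1 - t)) * d) := by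
      have e1 : φ w + 1 / (2 * τ) * ‖w - z‖ ^ 2
          ≤ (1 - t) * A + t * B - c * (t * (1 - t)) * d := by
        rw [hnw, hA, hB, hc]
        nlinarith [hφw]
      calc A ≤ φ w + 1 / (2 * τ) * ‖w - z‖ ^ 2 := hm
        _ ≤ (1 - t) * A + t * B - c * (t * (1-t)) * d := e1
        _ = (1 - t) * A + t * B + c * (- (t * (1-t)) * d) := by ring
    -- divide by t
    nlinarith [hcomb, ht0]
  -- take t → 0
  have htend : Filter.Tendsto (fun m : ℕ => A + c * ((1 - 1 / (m + 1)) * d))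
      Filter.atTop (nhds (A + c * ((1 - 0) * d))) := by
    apply Filter.Tendsto.const_add
    apply Filter.Tendsto.const_mul
    apply Filter.Tendsto.mul_const
    exact (tendsto_one_div_add_atTop_nhds_zero_nat).const_sub 1
  have hle : A + c * ((1 - 0) * d) ≤ B := by
    apply le_of_tendsto htend
    filter_upwards with m
    apply key
    · positivity
    · rw [div_le_one (by positivity)]; linarith [Nat.cast_nonneg (α := ℝ) m]
  calc A + c * d = A + c * ((1 - 0) * d) := by ring
    _ ≤ B := hle

end Aux

set_option maxHeartbeats 1000000 in
/-- Finite length and rate for αPGD: with `f` convex, differentiable, `∇f`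
`L_f`-Lipschitz, bounded below; `φ` `M`-weakly convex (`M ≥ 0`), bounded below;
`α ∈ (0,1)`, `τ > 0` with `τ < min(1/(αL_f), α/M)` (stated as `τ·α·L_f < 1` and
`τ·M < α`); `F = f + φ` with lower bound `F*`; and αPGD iterates:
setting `δ = (α/(2τ))(1 − 1/α)²` and `γ = (1/α)(1/(2τ) − M(2−α)/2)`, one has `γ − δ > 0`,
`Σ_{k≥1} ‖y_{k+1} − y_k‖² ≤ (F(y_1) + δ‖y_1 − y_0‖² − F*)/(γ − δ) < ∞`, and for every
`K ≥ 1`, `min_{1 ≤ k ≤ K} ‖y_{k+1} − y_k‖² ≤ (1/K)·(F(y_1) + δ‖y_1 − y_0‖² − F*)/(γ − δ)`. -/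
theorem alphaPGD_finite_length_and_rate {n : ℕ}
    (f : EuclideanSpace ℝ (Fin n) → ℝ)
    (f' : EuclideanSpace ℝ (Fin n) → EuclideanSpace ℝ (Fin n))
    (φ : EuclideanSpace ℝ (Fin n) → ℝ) (M L_f α τ Fstar : ℝ)
    (hf : ∀ x, HasGradientAt f (f' x) x)
    (hfconv : ConvexOn ℝ Set.univ f)
    (hlip : ∀ u v, ‖f' u - f' v‖ ≤ L_f * ‖u - v‖)
    (hfbd : ∃ c, ∀ x, c ≤ f x)
    (hM : 0 ≤ M)
    (hφ : ConvexOn ℝ Set.univ (fun x => φ x + M / 2 * ‖x‖ ^ 2))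
    (hφbd : ∃ c, ∀ x, c ≤ φ x)
    (hα : α ∈ Set.Ioo (0 : ℝ) 1) (hτ : 0 < τ)
    (hτL : τ * α * L_f < 1) (hτM : τ * M < α)
    (F : EuclideanSpace ℝ (Fin n) → ℝ) (hF : ∀ x, F x = f x + φ x)
    (hFstar : ∀ x, Fstar ≤ F x)
    (q x y : ℕ → EuclideanSpace ℝ (Fin n))
    (hq : ∀ k, q (k + 1) = (1 - α) • y k + α • x k)
    (hx : ∀ k, ∀ u,
      φ (x (k + 1)) + 1 / (2 * τ) * ‖x (k + 1) - (x k - τ • f' (q (k + 1)))‖ ^ 2 ≤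
        φ u + 1 / (2 * τ) * ‖u - (x k - τ • f' (q (k + 1)))‖ ^ 2)
    (hy : ∀ k, y (k + 1) = (1 - α) • y k + α • x (k + 1))
    (δ γ : ℝ)
    (hδ : δ = α / (2 * τ) * (1 - 1 / α) ^ 2)
    (hγ : γ = 1 / α * (1 / (2 * τ) - M * (2 - α) / 2)) :
    γ - δ > 0 ∧
    Summable (fun k : ℕ => ‖y (k + 2) - y (k + 1)‖ ^ 2) ∧
    (∑' k : ℕ, ‖y (k + 2) - y (k + 1)‖ ^ 2) ≤
      (F (y 1) + δ * ‖y 1 - y 0‖ ^ 2 - Fstar) / (γ - δ) ∧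
    (∀ K : ℕ, 1 ≤ K → ∃ k : ℕ, 1 ≤ k ∧ k ≤ K ∧
      ‖y (k + 1) - y k‖ ^ 2 ≤
        (1 / (K : ℝ)) * ((F (y 1) + δ * ‖y 1 - y 0‖ ^ 2 - Fstar) / (γ - δ))) := by
  obtain ⟨hα0, hα1⟩ := hα
  have hαne : α ≠ 0 := ne_of_gt hα0
  have hτne : τ ≠ 0 := ne_of_gt hτ
  -- γ - δ > 0
  have hγδeq : γ - δ = (2 - α) * (α - τ * M) / (2 * τ * α) := by
    rw [hγ, hδ]; field_simp; ring
  have hpos : γ - δ > 0 := by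
    rw [hγδeq]
    apply div_pos (mul_pos (by linarith) (by linarith)) (by positivity)
  have hδnn : 0 ≤ δ := by rw [hδ]; positivity
  -- the key one-step inequality
  have key : ∀ k : ℕ, F (y (k+2)) + γ * ‖y (k+2) - y (k+1)‖^2 ≤
      F (y (k+1)) + δ * ‖y (k+1) - y k‖^2 := by
    intro k
    set Y0 := y k with hY0d
    set Y1 := y (k+1) with hY1d
    set Y2 := y (k+2) with hY2d
    set X1 := x (k+1) with hX1d
    set X2 := x (k+2) with hX2d
    set Q := q (k+2) with hQd
    set G := f' Q with hGd
    have hQ : Q = (1-α) • Y1 + α • X1 := hq (k+1)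
    have hY1 : Y1 = (1-α) • Y0 + α • X1 := hy k
    have hY2 : Y2 = (1-α) • Y1 + α • X2 := hy (k+1)
    set S := ‖X2 - X1‖^2 with hSd
    set D2 := ‖Y2 - Y1‖^2 with hD2d
    set D1 := ‖Y1 - Y0‖^2 with hD1d
    -- norm identities
    have n1 : ‖Y2 - Q‖^2 = α^2 * S := by
      have hv : Y2 - Q = α • (X2 - X1) := by rw [hY2, hQ]; module
      rw [hv, norm_smul, Real.norm_eq_abs, mul_pow, sq_abs, hSd]
    have n2 : ‖X2 - Y1‖^2 = (1/α)^2 * D2 := by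
      have e : Y2 - Y1 = α • (X2 - Y1) := by rw [hY2]; module
      have hv : X2 - Y1 = (1/α) • (Y2 - Y1) := by
        rw [e, smul_smul, one_div, inv_mul_cancel₀ hαne, one_smul]
      rw [hv, norm_smul, Real.norm_eq_abs, mul_pow, sq_abs, hD2d]
    have n3 : ‖Y1 - X1‖^2 = (1 - 1/α)^2 * D1 := by
      have e : α • (Y1 - X1) = (α - 1) • (Y1 - Y0) := by rw [hY1]; module
      have hv : Y1 - X1 = (1 - 1/α) • (Y1 - Y0) := by
        have h2 := congrArg (fun v => (α⁻¹ : ℝ) • v) e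
        simp only [smul_smul, inv_mul_cancel₀ hαne, one_smul] at h2
        rw [h2]
        congr 1
        field_simp
      rw [hv, norm_smul, Real.norm_eq_abs, mul_pow, sq_abs, hD1d]
    -- (i) descent lemma
    have hi : f Y2 ≤ f Q + ⟪G, Y2 - Q⟫ + L_f/2 * (α^2 * S) := by
      have := descent_lemma_s13 hf hlip Q Y2
      rw [n1] at this
      exact this
    -- (ii) convexity
    have hii : f Q + ⟪G, Y1 - Q⟫ ≤ f Y1 := grad_convex_ineq hf hfconv Q Y1
    -- (iii) weak convexity combination
    have hiii : φ Y2 ≤ (1-α) * φ Y1 + α * φ X2 + M/2*(α*(1-α)) * ((1/α)^2 * D2) := by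
      have := weak_convex_comb hφ (le_of_lt hα0) (le_of_lt hα1) Y1 X2
      rw [n2] at this
      rw [hY2]
      exact this
    -- (iv) strong prox inequality
    have hmin : ∀ u, φ X2 + 1 / (2 * τ) * ‖X2 - (X1 - τ • G)‖ ^ 2 ≤
        φ u + 1 / (2 * τ) * ‖u - (X1 - τ • G)‖ ^ 2 := hx (k+1)
    have hiv0 := strong_min hτ hφ X2 (X1 - τ • G) hmin Y1
    have hexp : ∀ w : EuclideanSpace ℝ (Fin n),
        1/(2*τ) * ‖w - (X1 - τ • G)‖^2
          = 1/(2*τ) * ‖w - X1‖^2 + ⟪G, w - X1⟫ + τ/2 * ‖G‖^2 := by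
      intro w
      have hvec : w - (X1 - τ • G) = (w - X1) + τ • G := by abel
      rw [hvec, norm_add_sq_real, real_inner_smul_right, norm_smul, Real.norm_eq_abs,
        mul_pow, sq_abs, real_inner_comm]
      field_simp
    rw [hexp X2, hexp Y1] at hiv0
    have hiv : φ X2 + 1/(2*τ) * S + ⟪G, X2 - X1⟫
        + (1/(2*τ) - M/2) * ((1/α)^2 * D2)
        ≤ φ Y1 + 1/(2*τ) * ((1 - 1/α)^2 * D1) + ⟪G, Y1 - X1⟫ := by
      have hn : ‖Y1 - X2‖^2 = (1/α)^2 * D2 := by rw [norm_sub_rev]; exact n2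
      rw [hn, n3, ← hSd] at hiv0
      linarith [hiv0]
    -- inner product cancellation
    have hzero : ⟪G, Y2 - Q⟫ - ⟪G, Y1 - Q⟫ + α * ⟪G, Y1 - X1⟫ - α * ⟪G, X2 - X1⟫ = 0 := by
      have hv : (Y2 - Q) - (Y1 - Q) + α • (Y1 - X1) - α • (X2 - X1) =
          (0 : EuclideanSpace ℝ (Fin n)) := by rw [hY2]; module
      rw [show (⟪G, Y2 - Q⟫ - ⟪G, Y1 - Q⟫ + α * ⟪G, Y1 - X1⟫ - α * ⟪G, X2 - X1⟫ : ℝ)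
          = ⟪G, (Y2 - Q) - (Y1 - Q) + α • (Y1 - X1) - α • (X2 - X1)⟫ by
        simp only [inner_sub_right, inner_add_right, real_inner_smul_right]
        try ring]
      rw [hv, inner_zero_right]
    -- multiply hiv by α
    have hivα := mul_le_mul_of_nonneg_left hiv (le_of_lt hα0)
    -- coefficient facts
    have hScoef : L_f/2 * (α^2 * S) ≤ α * (1/(2*τ) * S) := by
      have hSnn : (0:ℝ) ≤ S := by positivity
      have h1 : L_f/2 * α^2 ≤ α * (1/(2*τ)) := by
        rw [div_mul_eq_mul_div, mul_one_div, div_le_div_iff₀ (by norm_num) (by positivity)]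
        have h2 := mul_lt_mul_of_pos_left hτL hα0
        nlinarith [h2]
      calc L_f/2 * (α^2 * S) = (L_f/2 * α^2) * S := by ring
        _ ≤ (α * (1/(2*τ))) * S := mul_le_mul_of_nonneg_right h1 hSnn
        _ = α * (1/(2*τ) * S) := by ring
    have hD2coef : M/2*(α*(1-α)) * ((1/α)^2 * D2)
        - α * ((1/(2*τ) - M/2) * ((1/α)^2 * D2)) = -(γ * D2) := by
      rw [hγ]; field_simp; ring
    have hD1coef : α * (1/(2*τ) * ((1 - 1/α)^2 * D1)) = δ * D1 := by
      rw [hδ]; ring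
    have hinner : α * ⟪G, X2 - X1⟫ - α * ⟪G, Y1 - X1⟫ =
        ⟪G, Y2 - Q⟫ - ⟪G, Y1 - Q⟫ := by linarith [hzero]
    rw [hF, hF]
    linarith [hi, hii, hiii, hivα, hScoef, hD2coef, hD1coef, hinner]
  -- telescoping
  set E : ℕ → ℝ := fun k => F (y (k+1)) + δ * ‖y (k+1) - y k‖^2 with hE
  set B : ℝ := F (y 1) + δ * ‖y 1 - y 0‖^2 - Fstar with hBdef
  have hnn : ∀ j : ℕ, 0 ≤ ‖y (j+2) - y (j+1)‖^2 := fun j => by positivity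
  have hsum : ∀ K : ℕ, (γ - δ) * ∑ j ∈ Finset.range K, ‖y (j+2) - y (j+1)‖^2 ≤ B := by
    intro K
    have step : ∀ j ∈ Finset.range K,
        (γ - δ) * ‖y (j+2) - y (j+1)‖^2 ≤ E j - E (j+1) := by
      intro j _
      have := key j
      simp only [hE]
      linarith
    calc (γ - δ) * ∑ j ∈ Finset.range K, ‖y (j+2) - y (j+1)‖^2
        = ∑ j ∈ Finset.range K, (γ - δ) * ‖y (j+2) - y (j+1)‖^2 := Finset.mul_sum _ _ _
      _ ≤ ∑ j ∈ Finset.range K, (E j - E (j+1)) := Finset.sum_le_sum step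
      _ = E 0 - E K := Finset.sum_range_sub' E K
      _ ≤ B := by
          have h1 := hFstar (y (K+1))
          have h2 : (0:ℝ) ≤ δ * ‖y (K+1) - y K‖^2 := by positivity
          simp only [hE, hBdef]
          linarith
  have hsum' : ∀ K : ℕ, ∑ j ∈ Finset.range K, ‖y (j+2) - y (j+1)‖^2 ≤ B / (γ - δ) := by
    intro K
    rw [le_div_iff₀ hpos]
    calc (∑ j ∈ Finset.range K, ‖y (j+2) - y (j+1)‖^2) * (γ - δ)
        = (γ - δ) * ∑ j ∈ Finset.range K, ‖y (j+2) - y (j+1)‖^2 := by ring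
      _ ≤ B := hsum K
  have hsummable : Summable (fun k : ℕ => ‖y (k + 2) - y (k + 1)‖ ^ 2) :=
    summable_of_sum_range_le hnn hsum'
  refine ⟨hpos, hsummable, Real.tsum_le_of_sum_range_le hnn hsum', ?_⟩
  -- the min-rate statement
  intro K hK
  by_contra hcon
  push_neg at hcon
  have hKpos : (0:ℝ) < K := by exact_mod_cast hK
  have hlt : ∀ j ∈ Finset.range K, (1 / (K:ℝ)) * (B / (γ - δ)) < ‖y (j+2) - y (j+1)‖^2 := by
    intro j hj
    rw [Finset.mem_range] at hj
    have h1 : 1 ≤ j + 1 := Nat.le_add_left 1 j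
    have h2 : j + 1 ≤ K := hj
    exact hcon (j+1) h1 h2
  have hsumlt : (K:ℝ) * ((1 / (K:ℝ)) * (B / (γ - δ)))
      < ∑ j ∈ Finset.range K, ‖y (j+2) - y (j+1)‖^2 := by
    have := Finset.sum_lt_sum_of_nonempty
      (Finset.nonempty_range_iff.mpr (by omega : K ≠ 0)) hlt
    simpa [Finset.sum_const, Finset.card_range, nsmul_eq_mul] using this
  have heq : (K:ℝ) * ((1 / (K:ℝ)) * (B / (γ - δ))) = B / (γ - δ) := by
    field_simp
  rw [heq] at hsumlt
  exact absurd (hsum' K) (not_le.mpr hsumlt)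
end

section
/- Convergence of ProxPnP-PGD: let f : ℝⁿ → ℝ be differentiable with ∇f L_f-Lipschitz and bounded below, let λ > 0, let 0 ≤ M < 1 and let φ : ℝⁿ → ℝ be M-weakly convex and bounded below, and assume λ·L_f + M < 2. Set F = λf + φ with lower bound F*. Let (x_k) be a sequence such that for each k, x_{k+1} minimizes u ↦ φ(u) + (1/2)‖u − (x_k − λ·∇f(x_k))‖² over ℝⁿ (PGD with stepsize τ = 1 applied to λf + φ). Then (F(x_k)) is non-increasing, Σ_{k=0}^∞ ‖x_{k+1} − x_k‖² ≤ (F(x_0) − F*)/(1 − (M + λL_f)/2) < ∞, and for every K ≥ 1, min_{0 ≤ k < K} ‖x_{k+1} − x_k‖² ≤ (1/K)·(F(x_0) − F*)/(1 − (M + λL_f)/2). -/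
open RealInnerProductSpace

lemma aux_descent {E : Type*} [NormedAddCommGroup E] [InnerProductSpace ℝ E] [CompleteSpace E]
    (f : E → ℝ) (f' : E → E) (L : ℝ)
    (hf : ∀ x, HasGradientAt f (f' x) x)
    (hlip : ∀ u v, ‖f' u - f' v‖ ≤ L * ‖u - v‖) (x y : E) :
    f y ≤ f x + ⟪f' x, y - x⟫ + L / 2 * ‖y - x‖ ^ 2 := by
  set d := y - x with hd
  rcases eq_or_ne d 0 with h0 | h0
  · have : y = x := by rw [← sub_eq_zero]; exact h0
    simp [this, ← hd, h0]
  · have hL : 0 ≤ L := by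
      have h1 := hlip y x
      have h2 : (0:ℝ) < ‖y - x‖ := by rw [← hd]; exact norm_pos_iff.mpr h0
      nlinarith [norm_nonneg (f' y - f' x)]
    -- g t = f (x + t • d) - t * ⟪f' x, d⟫ - L/2 * t^2 * ‖d‖^2
    set g : ℝ → ℝ := fun t => f (x + t • d) - t * ⟪f' x, d⟫ - L / 2 * t ^ 2 * ‖d‖ ^ 2 with hg
    have hderiv : ∀ t : ℝ, HasDerivAt g (⟪f' (x + t • d), d⟫ - ⟪f' x, d⟫ - L * t * ‖d‖ ^ 2) t := by
      intro t
      have hc : HasDerivAt (fun t : ℝ => x + t • d) d t := by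
        simpa using ((hasDerivAt_id t).smul_const d).const_add x
      have h1 : HasDerivAt (fun t : ℝ => f (x + t • d)) (⟪f' (x + t • d), d⟫) t := by
        have := ((hf (x + t • d)).hasFDerivAt).comp_hasDerivAt t hc
        simp at this
        exact this
      have h2 : HasDerivAt (fun t : ℝ => t * ⟪f' x, d⟫) (⟪f' x, d⟫) t := by
        simpa using (hasDerivAt_id t).mul_const _
      have h3 : HasDerivAt (fun t : ℝ => L / 2 * t ^ 2 * ‖d‖ ^ 2) (L * t * ‖d‖ ^ 2) t := by
        have := ((hasDerivAt_pow 2 t).const_mul (L / 2)).mul_const (‖d‖ ^ 2)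
        exact this.congr_deriv (by ring)
      exact (h1.sub h2).sub h3
    have hmono : g 1 ≤ g 0 := by
      have : AntitoneOn g (Set.Icc 0 1) := by
        apply antitoneOn_of_deriv_nonpos (convex_Icc 0 1)
        · exact fun t _ => (hderiv t).differentiableAt.continuousAt.continuousWithinAt
        · intro t ht
          exact ((hderiv t).differentiableAt).differentiableWithinAt
        · intro t ht
          rw [interior_Icc] at ht
          rw [(hderiv t).deriv]
          have hb : ⟪f' (x + t • d) - f' x, d⟫ ≤ ‖f' (x + t • d) - f' x‖ * ‖d‖ :=
            real_inner_le_norm _ _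
          have hl : ‖f' (x + t • d) - f' x‖ ≤ L * (t * ‖d‖) := by
            have := hlip (x + t • d) x
            simpa [norm_smul, abs_of_pos ht.1] using this
          have hdn : (0:ℝ) ≤ ‖d‖ := norm_nonneg d
          rw [inner_sub_left] at hb
          nlinarith
      exact this (by simp) (by norm_num) (by norm_num)
    have := hmono
    simp only [hg] at this
    simp only [one_smul, zero_smul, add_zero] at this
    have hxy : x + d = y := by rw [hd]; abel
    rw [hxy] at this
    nlinarith [this]
lemma aux_quad {E : Type*} [NormedAddCommGroup E] [InnerProductSpace ℝ E]
    (M t : ℝ) (p u z : E) :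
    1/2 * ‖((1-t) • p + t • u) - z‖^2 - M/2 * ‖(1-t) • p + t • u‖^2
      = (1-t) * (1/2 * ‖p - z‖^2 - M/2 * ‖p‖^2) + t * (1/2 * ‖u - z‖^2 - M/2 * ‖u‖^2)
        - (1-M)/2 * (t * (1-t)) * ‖u - p‖^2 := by
  have h : ∀ a : E, ‖a‖^2 = ⟪a, a⟫ := fun a => (real_inner_self_eq_norm_sq a).symm
  simp only [h, inner_sub_left, inner_sub_right, inner_add_left, inner_add_right,
    inner_smul_left, inner_smul_right, conj_trivial]
  rw [real_inner_comm u p, real_inner_comm z p, real_inner_comm z u]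
  ring

lemma aux_prox {E : Type*} [NormedAddCommGroup E] [InnerProductSpace ℝ E]
    (φ : E → ℝ) (M : ℝ) (hM : M ≤ 1)
    (hφ : ConvexOn ℝ Set.univ (fun x => φ x + M / 2 * ‖x‖ ^ 2))
    (z p : E) (hp : ∀ u, φ p + 1/2 * ‖p - z‖^2 ≤ φ u + 1/2 * ‖u - z‖^2) (u : E) :
    φ p + 1/2 * ‖p - z‖^2 + (1-M)/2 * ‖u - p‖^2 ≤ φ u + 1/2 * ‖u - z‖^2 := by
  set c : ℝ := (1-M)/2 * ‖u - p‖^2 with hc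
  have hc0 : 0 ≤ c := by
    have h1 : (0:ℝ) ≤ (1-M)/2 := by linarith
    have h2 : (0:ℝ) ≤ ‖u - p‖^2 := by positivity
    exact mul_nonneg h1 h2
  have key : ∀ t : ℝ, 0 < t → t ≤ 1 →
      φ p + 1/2 * ‖p - z‖^2 + c ≤ φ u + 1/2 * ‖u - z‖^2 + t * c := by
    intro t ht0 ht1
    have hcv := hφ.2 (Set.mem_univ p) (Set.mem_univ u) (by linarith : (0:ℝ) ≤ 1 - t)
      (le_of_lt ht0) (by ring)
    simp only [smul_eq_mul] at hcv
    have hq := aux_quad M t p u z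
    have hmin := hp ((1-t) • p + t • u)
    have h6 : φ p + 1/2 * ‖p - z‖^2 ≤
        φ u + 1/2 * ‖u - z‖^2 - (1-t)*((1-M)/2 * ‖u - p‖^2) :=
      le_of_mul_le_mul_left (by nlinarith [hmin, hcv, hq]) ht0
    rw [hc]
    linarith
  refine le_of_forall_pos_le_add ?_
  intro ε hε
  rcases eq_or_lt_of_le hc0 with h0 | h0
  · have := key 1 one_pos le_rfl
    rw [← h0] at this ⊢
    linarith
  · set t : ℝ := min 1 (ε / c) with htd
    have ht0 : 0 < t := lt_min one_pos (div_pos hε h0)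
    have ht1 : t ≤ 1 := min_le_left _ _
    have htc : t * c ≤ ε := by
      have : t ≤ ε / c := min_le_right _ _
      calc t * c ≤ (ε / c) * c := by nlinarith
        _ = ε := by field_simp
    have := key t ht0 ht1
    linarith

/-- Convergence of ProxPnP-PGD: with `f` differentiable, `∇f`
`L_f`-Lipschitz, bounded below; `λ > 0`; `0 ≤ M < 1`, `φ` `M`-weakly convex and bounded
below; `λL_f + M < 2`; `F = λf + φ` with lower bound `F*`; and iterates
`x_{k+1} ∈ Prox_φ(x_k − λ∇f(x_k))`: `(F(x_k))` is non-increasing,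
`Σ_k ‖x_{k+1} − x_k‖² ≤ (F(x_0) − F*)/(1 − (M + λL_f)/2) < ∞`, and for every `K ≥ 1`
there is `k < K` with `‖x_{k+1} − x_k‖² ≤ (1/K)·(F(x_0) − F*)/(1 − (M + λL_f)/2)`. -/
theorem proxPnP_PGD_convergence {n : ℕ}
    (f : EuclideanSpace ℝ (Fin n) → ℝ)
    (f' : EuclideanSpace ℝ (Fin n) → EuclideanSpace ℝ (Fin n))
    (φ : EuclideanSpace ℝ (Fin n) → ℝ) (M L_f lam Fstar : ℝ)
    (hf : ∀ x, HasGradientAt f (f' x) x)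
    (hlip : ∀ u v, ‖f' u - f' v‖ ≤ L_f * ‖u - v‖)
    (hfbd : ∃ c, ∀ x, c ≤ f x)
    (hlam : 0 < lam)
    (hM0 : 0 ≤ M) (hM1 : M < 1)
    (hφ : ConvexOn ℝ Set.univ (fun x => φ x + M / 2 * ‖x‖ ^ 2))
    (hφbd : ∃ c, ∀ x, c ≤ φ x)
    (hcond : lam * L_f + M < 2)
    (F : EuclideanSpace ℝ (Fin n) → ℝ) (hF : ∀ x, F x = lam * f x + φ x)
    (hFstar : ∀ x, Fstar ≤ F x)
    (x : ℕ → EuclideanSpace ℝ (Fin n))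
    (hx : ∀ k, ∀ u,
      φ (x (k + 1)) + 1 / 2 * ‖x (k + 1) - (x k - lam • f' (x k))‖ ^ 2 ≤
        φ u + 1 / 2 * ‖u - (x k - lam • f' (x k))‖ ^ 2) :
    (∀ k, F (x (k + 1)) ≤ F (x k)) ∧
    Summable (fun k : ℕ => ‖x (k + 1) - x k‖ ^ 2) ∧
    (∑' k : ℕ, ‖x (k + 1) - x k‖ ^ 2) ≤
      (F (x 0) - Fstar) / (1 - (M + lam * L_f) / 2) ∧
    (∀ K : ℕ, 1 ≤ K → ∃ k < K,
      ‖x (k + 1) - x k‖ ^ 2 ≤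
        (1 / (K : ℝ)) * ((F (x 0) - Fstar) / (1 - (M + lam * L_f) / 2))) := by
  have hδ : 0 < 1 - (M + lam * L_f) / 2 := by linarith
  -- key one-step inequality
  have key : ∀ k, F (x (k + 1)) + (1 - (M + lam * L_f) / 2) * ‖x (k + 1) - x k‖ ^ 2
      ≤ F (x k) := by
    intro k
    set z := x k - lam • f' (x k) with hz
    have hprox := aux_prox φ M hM1.le hφ z (x (k + 1)) (hx k) (x k)
    rw [norm_sub_rev (x k)] at hprox
    have hdes := aux_descent f f' L_f hf hlip (x k) (x (k + 1))
    have hdes' : lam * f (x (k + 1)) ≤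
        lam * (f (x k) + ⟪f' (x k), x (k + 1) - x k⟫ + L_f / 2 * ‖x (k + 1) - x k‖ ^ 2) :=
      mul_le_mul_of_nonneg_left hdes hlam.le
    have e1 : ‖x (k + 1) - z‖ ^ 2 = ‖x (k + 1) - x k‖ ^ 2
        + 2 * (lam * ⟪f' (x k), x (k + 1) - x k⟫) + lam ^ 2 * ‖f' (x k)‖ ^ 2 := by
      have : x (k + 1) - z = (x (k + 1) - x k) + lam • f' (x k) := by
        rw [hz]; abel
      rw [this, norm_add_sq_real, real_inner_smul_right, norm_smul]
      rw [Real.norm_eq_abs, abs_of_pos hlam, real_inner_comm]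
      ring
    have e2 : ‖x k - z‖ ^ 2 = lam ^ 2 * ‖f' (x k)‖ ^ 2 := by
      have : x k - z = lam • f' (x k) := by rw [hz]; abel
      rw [this, norm_smul, Real.norm_eq_abs, abs_of_pos hlam, mul_pow]
    rw [hF, hF]
    nlinarith [hprox, hdes', e1, e2]
  have hmono : ∀ k, F (x (k + 1)) ≤ F (x k) := by
    intro k
    have h1 : (0:ℝ) ≤ ‖x (k + 1) - x k‖ ^ 2 := by positivity
    nlinarith [key k, h1]
  have hnn : ∀ k : ℕ, (0:ℝ) ≤ ‖x (k + 1) - x k‖ ^ 2 := fun k => by positivity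
  set B : ℝ := (F (x 0) - Fstar) / (1 - (M + lam * L_f) / 2) with hB
  have hsum : ∀ K : ℕ, ∑ k ∈ Finset.range K, ‖x (k + 1) - x k‖ ^ 2 ≤ B := by
    intro K
    have htel : ∑ k ∈ Finset.range K, (F (x k) - F (x (k + 1))) = F (x 0) - F (x K) :=
      Finset.sum_range_sub' (fun k => F (x k)) K
    have h1 : (1 - (M + lam * L_f) / 2) * ∑ k ∈ Finset.range K, ‖x (k + 1) - x k‖ ^ 2
        ≤ F (x 0) - Fstar := by
      rw [Finset.mul_sum]
      calc ∑ k ∈ Finset.range K, (1 - (M + lam * L_f) / 2) * ‖x (k + 1) - x k‖ ^ 2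
          ≤ ∑ k ∈ Finset.range K, (F (x k) - F (x (k + 1))) :=
            Finset.sum_le_sum (fun k _ => by linarith [key k])
        _ = F (x 0) - F (x K) := htel
        _ ≤ F (x 0) - Fstar := by linarith [hFstar (x K)]
    rw [hB, le_div_iff₀ hδ]
    linarith
  have hsummable : Summable (fun k : ℕ => ‖x (k + 1) - x k‖ ^ 2) :=
    summable_of_sum_range_le hnn hsum
  refine ⟨hmono, hsummable, Real.tsum_le_of_sum_range_le hnn hsum, ?_⟩
  intro K hK
  have hKpos : (0:ℝ) < K := by exact_mod_cast hK
  obtain ⟨k, hk, hkmin⟩ := Finset.exists_min_image (Finset.range K)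
    (fun k => ‖x (k + 1) - x k‖ ^ 2) ⟨0, Finset.mem_range.mpr hK⟩
  refine ⟨k, Finset.mem_range.mp hk, ?_⟩
  have hcard : (K : ℝ) * ‖x (k + 1) - x k‖ ^ 2 ≤
      ∑ i ∈ Finset.range K, ‖x (i + 1) - x i‖ ^ 2 := by
    have := Finset.card_nsmul_le_sum (Finset.range K)
      (fun i => ‖x (i + 1) - x i‖ ^ 2) (‖x (k + 1) - x k‖ ^ 2)
      (fun i hi => hkmin i hi)
    simpa [Finset.card_range, nsmul_eq_mul] using this
  have := le_trans hcard (hsum K)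
  rw [one_div, inv_mul_eq_div, le_div_iff₀ hKpos]
  linarith
end

section
/- One-step decrease of the Douglas–Rachford envelope for ProxPnP-DRS: let 0 ≤ L < 1, let φ : ℝⁿ → ℝ be differentiable, M-weakly convex with M = L/(L+1), and with ∇φ (L/(1−L))-Lipschitz; let f : ℝⁿ → ℝ, λ > 0, β ∈ (0,1). Define F^{DR}(x,y,z) = λf(z) + φ(y) + ⟨y−x, y−z⟩ + (1/2)‖y−z‖². Let the sequences (x_k), (y_k), (z_k) satisfy, for each k: y_{k+1} is the unique minimizer over ℝⁿ of u ↦ φ(u) + (1/2)‖u − x_k‖²; z_{k+1} is a minimizer over ℝⁿ of u ↦ λf(u) + (1/2)‖u − (2y_{k+1} − x_k)‖²; x_{k+1} = x_k + 2β(z_{k+1} − y_{k+1}). Then for all k ≥ 1, F^{DR}(x_k, y_{k+1}, z_{k+1}) − F^{DR}(x_{k−1}, y_k, z_k) ≤ (1/2)·( 1 + M + (1/β)( L²/(1−L)² − 1 ) )·‖y_{k+1} − y_k‖². In particular, if β(2L³ − 3L² + 1) + (2L² + L − 1) < 0, then F^{DR}(x_k, y_{k+1}, z_{k+1}) ≤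 F^{DR}(x_{k−1}, y_k, z_k), for any value of λ > 0. -/
open RealInnerProductSpace Topology

section Aux

variable {E : Type*} [NormedAddCommGroup E] [InnerProductSpace ℝ E] [CompleteSpace E]

/-- Subgradient inequality for a convex differentiable function. -/
lemma aux_convexOn_fderiv_le {h : E → ℝ} (hc : ConvexOn ℝ Set.univ h) {D : E →L[ℝ] ℝ} {y : E}
    (hg : HasFDerivAt h D y) (u : E) : h y + D (u - y) ≤ h u := by
  set v := u - y with hv
  have h0 : y + (0:ℝ) • v = y := by simp
  have hline : HasDerivAt (fun t : ℝ => y + t • v) v 0 := by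
    simpa using ((hasDerivAt_id (0:ℝ)).smul_const v).const_add y
  have hg' : HasFDerivAt h D (y + (0:ℝ) • v) := by rwa [h0]
  have hq : HasDerivAt (fun t : ℝ => h (y + t • v)) (D v) 0 :=
    hg'.comp_hasDerivAt 0 hline
  have hslope : Filter.Tendsto (slope (fun t : ℝ => h (y + t • v)) 0) (𝓝[>] 0) (𝓝 (D v)) :=
    (hasDerivAt_iff_tendsto_slope.mp hq).mono_left
      (nhdsWithin_mono 0 (fun t ht => by simpa using ne_of_gt ht))
  have hev : ∀ᶠ t in 𝓝[>] (0:ℝ), slope (fun t : ℝ => h (y + t • v)) 0 t ≤ h u - h y := by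
    filter_upwards [Ioc_mem_nhdsGT_of_mem (Set.mem_Ico.mpr ⟨le_refl (0:ℝ), zero_lt_one⟩)] with t ht
    obtain ⟨ht0, ht1⟩ := ht
    have heq : y + t • v = (1 - t) • y + t • u := by
      rw [hv, smul_sub, sub_smul, one_smul]; abel
    have hc1 : h (y + t • v) ≤ (1 - t) * h y + t * h u := by
      rw [heq]
      exact hc.2 (Set.mem_univ y) (Set.mem_univ u) (by linarith) (le_of_lt ht0) (by ring)
    have hkey : h (y + t • v) - h y ≤ t * (h u - h y) := by nlinarith
    have hs : slope (fun t : ℝ => h (y + t • v)) 0 t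
        = (h (y + t • v) - h (y + (0:ℝ) • v)) / t := by
      simp [slope_def_field]
    rw [hs, h0, div_le_iff₀ ht0]
    linarith
  have := le_of_tendsto hslope hev
  linarith

/-- First-order optimality condition for the prox of `φ`. -/
lemma aux_prox_foc {φ : E → ℝ} {φ' : E → E} (hφdiff : ∀ x, HasGradientAt φ (φ' x) x)
    (xk yk : E) (hmin : ∀ u, φ yk + 1/2*‖yk - xk‖^2 ≤ φ u + 1/2*‖u - xk‖^2) :
    φ' yk = xk - yk := by
  have h1 : HasFDerivAt (fun u : E => ‖u - xk‖^2)
      (2 • (innerSL ℝ (yk - xk)).comp (ContinuousLinearMap.id ℝ E)) yk := by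
    simpa using ((hasFDerivAt_id yk).sub_const xk).norm_sq
  have hfd : HasFDerivAt (fun u => φ u + 1/2*‖u - xk‖^2)
      ((InnerProductSpace.toDual ℝ E) (φ' yk)
        + (1/2 : ℝ) • (2 • (innerSL ℝ (yk - xk)).comp (ContinuousLinearMap.id ℝ E))) yk :=
    (hasGradientAt_iff_hasFDerivAt.mp (hφdiff yk)).add (h1.const_mul (1/2))
  have hloc : IsLocalMin (fun u => φ u + 1/2*‖u - xk‖^2) yk :=
    Filter.Eventually.of_forall hmin
  have hz := hloc.hasFDerivAt_eq_zero hfd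
  have hw := DFunLike.congr_fun hz (φ' yk + (yk - xk))
  simp only [ContinuousLinearMap.add_apply, ContinuousLinearMap.smul_apply,
    ContinuousLinearMap.coe_smul', Pi.smul_apply, ContinuousLinearMap.coe_comp',
    Function.comp_apply, ContinuousLinearMap.coe_id', id_eq, innerSL_apply_apply,
    InnerProductSpace.toDual_apply_apply, ContinuousLinearMap.zero_apply, smul_eq_mul,
    nsmul_eq_mul, Nat.cast_ofNat] at hw
  have hinner : ⟪φ' yk + (yk - xk), φ' yk + (yk - xk)⟫ = 0 := by
    rw [inner_add_left]; linarith
  have h0 : φ' yk + (yk - xk) = 0 := by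
    simpa using inner_self_eq_zero.mp hinner
  rw [add_eq_zero_iff_eq_neg] at h0
  rw [h0, neg_sub]

/-- Weak-convexity subgradient inequality. -/
lemma aux_weak_conv_ineq {φ : E → ℝ} {φ' : E → E} (hφdiff : ∀ x, HasGradientAt φ (φ' x) x)
    (M : ℝ) (hφwc : ConvexOn ℝ Set.univ (fun x => φ x + M / 2 * ‖x‖ ^ 2)) (y2 y1 : E) :
    φ y2 - φ y1 ≤ ⟪φ' y2, y2 - y1⟫ + M/2 * ‖y2 - y1‖^2 := by
  have h1 : HasFDerivAt (fun u : E => ‖u‖^2)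
      (2 • (innerSL ℝ y2).comp (ContinuousLinearMap.id ℝ E)) y2 := by
    simpa using (hasFDerivAt_id y2).norm_sq
  have hfd : HasFDerivAt (fun u => φ u + M/2 * ‖u‖^2)
      ((InnerProductSpace.toDual ℝ E) (φ' y2)
        + (M/2 : ℝ) • (2 • (innerSL ℝ y2).comp (ContinuousLinearMap.id ℝ E))) y2 :=
    (hasGradientAt_iff_hasFDerivAt.mp (hφdiff y2)).add (h1.const_mul (M/2))
  have hq := aux_convexOn_fderiv_le hφwc hfd y1
  simp only [ContinuousLinearMap.add_apply, ContinuousLinearMap.smul_apply,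
    ContinuousLinearMap.coe_smul', Pi.smul_apply, ContinuousLinearMap.coe_comp',
    Function.comp_apply, ContinuousLinearMap.coe_id', id_eq, innerSL_apply_apply,
    InnerProductSpace.toDual_apply_apply, smul_eq_mul, nsmul_eq_mul, Nat.cast_ofNat] at hq
  have key : ⟪φ' y2, y1 - y2⟫ + M/2 * (2*⟪y2, y1 - y2⟫)
      = -(⟪φ' y2, y2 - y1⟫ + M/2 * ‖y2 - y1‖^2) + M/2*‖y1‖^2 - M/2*‖y2‖^2 := by
    simp only [← real_inner_self_eq_norm_sq, inner_sub_left, inner_sub_right]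
    ring_nf
    simp only [real_inner_comm]
    ring_nf
  linarith [hq, key]

/-- The key quadratic identity for the DRS envelope decrease. -/
lemma aux_key_identity (β : ℝ) (hβ : β ≠ 0) (x0 x1 y1 y2 z1 z2 : E)
    (hx1 : x1 = x0 + (2*β) • (z1 - y1)) :
    ⟪x1 - y2, y2 - y1⟫ + 1/2*‖z1 - (y2 + y2 - x1)‖^2 - 1/2*‖z2 - (y2 + y2 - x1)‖^2
      + ⟪y2 - x1, y2 - z2⟫ + 1/2*‖y2 - z2‖^2 - ⟪y1 - x0, y1 - z1⟫ - 1/2*‖y1 - z1‖^2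
    = 1/(2*β)*‖(2*β) • (z1 - y1) - (y2 - y1)‖^2 + (1/2 - 1/(2*β))*‖y2 - y1‖^2 := by
  subst hx1
  simp only [← real_inner_self_eq_norm_sq, inner_sub_left, inner_sub_right,
    inner_add_left, inner_add_right, real_inner_smul_left, real_inner_smul_right]
  field_simp
  ring_nf
  simp only [real_inner_comm]
  ring_nf

end Aux

/-- One-step decrease of the Douglas–Rachford envelope for ProxPnP-DRS:
with `0 ≤ L < 1`, `φ` differentiable, `M`-weakly convex with `M = L/(L+1)`, `∇φ`
`(L/(1−L))`-Lipschitz; `f : ℝⁿ → ℝ`, `λ > 0`, `β ∈ (0,1)`;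
`F^{DR}(x,y,z) = λf(z) + φ(y) + ⟪y−x, y−z⟫ + (1/2)‖y−z‖²`; and DRS iterates
(`y_{k+1}` the unique minimizer of `u ↦ φ(u) + (1/2)‖u − x_k‖²`, `z_{k+1}` a minimizer of
`u ↦ λf(u) + (1/2)‖u − (2y_{k+1} − x_k)‖²`, `x_{k+1} = x_k + 2β(z_{k+1} − y_{k+1})`):
for all `k ≥ 1`,
`F^{DR}(x_k, y_{k+1}, z_{k+1}) − F^{DR}(x_{k−1}, y_k, z_k)
  ≤ (1/2)(1 + M + (1/β)(L²/(1−L)² − 1))‖y_{k+1} − y_k‖²`;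
in particular, if `β(2L³ − 3L² + 1) + (2L² + L − 1) < 0`, then
`F^{DR}(x_k, y_{k+1}, z_{k+1}) ≤ F^{DR}(x_{k−1}, y_k, z_k)`, for any `λ > 0`. -/
theorem proxPnP_DRS_envelope_decrease {n : ℕ}
    (f : EuclideanSpace ℝ (Fin n) → ℝ)
    (φ : EuclideanSpace ℝ (Fin n) → ℝ)
    (φ' : EuclideanSpace ℝ (Fin n) → EuclideanSpace ℝ (Fin n))
    (L M lam β : ℝ) (hL0 : 0 ≤ L) (hL1 : L < 1) (hM : M = L / (L + 1))
    (hφdiff : ∀ x, HasGradientAt φ (φ' x) x)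
    (hφwc : ConvexOn ℝ Set.univ (fun x => φ x + M / 2 * ‖x‖ ^ 2))
    (hφlip : ∀ u v, ‖φ' u - φ' v‖ ≤ L / (1 - L) * ‖u - v‖)
    (hlam : 0 < lam) (hβ : β ∈ Set.Ioo (0 : ℝ) 1)
    (FDR : EuclideanSpace ℝ (Fin n) → EuclideanSpace ℝ (Fin n) →
      EuclideanSpace ℝ (Fin n) → ℝ)
    (hFDR : ∀ x y z, FDR x y z =
      lam * f z + φ y + ⟪y - x, y - z⟫ + 1 / 2 * ‖y - z‖ ^ 2)
    (x y z : ℕ → EuclideanSpace ℝ (Fin n))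
    (hy : ∀ k, ∀ u,
      φ (y (k + 1)) + 1 / 2 * ‖y (k + 1) - x k‖ ^ 2 ≤
        φ u + 1 / 2 * ‖u - x k‖ ^ 2)
    (hyuniq : ∀ k, ∀ u,
      (∀ w, φ u + 1 / 2 * ‖u - x k‖ ^ 2 ≤ φ w + 1 / 2 * ‖w - x k‖ ^ 2) → u = y (k + 1))
    (hz : ∀ k, ∀ u,
      lam * f (z (k + 1)) + 1 / 2 * ‖z (k + 1) - (2 • y (k + 1) - x k)‖ ^ 2 ≤
        lam * f u + 1 / 2 * ‖u - (2 • y (k + 1) - x k)‖ ^ 2)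
    (hxs : ∀ k, x (k + 1) = x k + (2 * β) • (z (k + 1) - y (k + 1))) :
    (∀ k : ℕ, 1 ≤ k →
      FDR (x k) (y (k + 1)) (z (k + 1)) - FDR (x (k - 1)) (y k) (z k) ≤
        1 / 2 * (1 + M + 1 / β * (L ^ 2 / (1 - L) ^ 2 - 1)) * ‖y (k + 1) - y k‖ ^ 2) ∧
    (β * (2 * L ^ 3 - 3 * L ^ 2 + 1) + (2 * L ^ 2 + L - 1) < 0 →
      ∀ k : ℕ, 1 ≤ k →
        FDR (x k) (y (k + 1)) (z (k + 1)) ≤ FDR (x (k - 1)) (y k) (z k)) := by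
  obtain ⟨hβ0, hβ1⟩ := hβ
  have hL1' : (0:ℝ) < 1 - L := by linarith
  have hfoc : ∀ k, φ' (y (k + 1)) = x k - y (k + 1) := fun k =>
    aux_prox_foc hφdiff (x k) (y (k + 1)) (hy k)
  have main : ∀ k : ℕ, 1 ≤ k →
      FDR (x k) (y (k + 1)) (z (k + 1)) - FDR (x (k - 1)) (y k) (z k) ≤
        1 / 2 * (1 + M + 1 / β * (L ^ 2 / (1 - L) ^ 2 - 1)) * ‖y (k + 1) - y k‖ ^ 2 := by
    intro k hk
    obtain ⟨m, rfl⟩ : ∃ m, k = m + 1 := ⟨k - 1, (Nat.succ_pred_eq_of_pos hk).symm⟩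
    simp only [Nat.add_sub_cancel]
    rw [hFDR, hFDR]
    set x0 := x m
    set x1 := x (m + 1)
    set y1 := y (m + 1)
    set y2 := y (m + 1 + 1)
    set z1 := z (m + 1)
    set z2 := z (m + 1 + 1)
    have hp2 : φ' y2 = x1 - y2 := hfoc (m + 1)
    have hp3 : x1 = x0 + (2 * β) • (z1 - y1) := hxs m
    -- weak convexity inequality
    have hA : φ y2 - φ y1 ≤ ⟪x1 - y2, y2 - y1⟫ + M/2 * ‖y2 - y1‖^2 := by
      have := aux_weak_conv_ineq hφdiff M hφwc y2 y1
      rwa [hp2] at this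
    -- z-step optimality
    have hB : lam * f z2 + 1/2 * ‖z2 - (y2 + y2 - x1)‖^2 ≤
        lam * f z1 + 1/2 * ‖z1 - (y2 + y2 - x1)‖^2 := by
      have := hz (m + 1) z1
      rwa [two_smul ℕ y2, one_div, ← one_div] at this
    -- key identity
    have hid := aux_key_identity β (ne_of_gt hβ0) x0 x1 y1 y2 z1 z2 hp3
    -- Lipschitz bound
    have hd : φ' y2 - φ' y1 = (2 * β) • (z1 - y1) - (y2 - y1) := by
      rw [hp2, hfoc m, hp3]; abel
    have hlip : ‖(2 * β) • (z1 - y1) - (y2 - y1)‖ ≤ L / (1 - L) * ‖y2 - y1‖ := by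
      rw [← hd]; exact hφlip y2 y1
    have hsq : ‖(2 * β) • (z1 - y1) - (y2 - y1)‖^2 ≤ (L / (1 - L))^2 * ‖y2 - y1‖^2 := by
      have h1 := norm_nonneg ((2 * β) • (z1 - y1) - (y2 - y1))
      nlinarith [hlip, norm_nonneg (y2 - y1), div_nonneg hL0 (le_of_lt hL1')]
    have hsq' : 1/(2*β) * ‖(2 * β) • (z1 - y1) - (y2 - y1)‖^2 ≤
        1/(2*β) * ((L / (1 - L))^2 * ‖y2 - y1‖^2) := by
      apply mul_le_mul_of_nonneg_left hsq
      positivity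
    have ceq : M/2 * ‖y2 - y1‖^2 + 1/(2*β) * ((L / (1 - L))^2 * ‖y2 - y1‖^2)
        + (1/2 - 1/(2*β)) * ‖y2 - y1‖^2
        = 1 / 2 * (1 + M + 1 / β * (L ^ 2 / (1 - L) ^ 2 - 1)) * ‖y2 - y1‖ ^ 2 := by
      have hβne : β ≠ 0 := ne_of_gt hβ0
      field_simp
      ring
    linarith [hA, hB, hid, hsq', ceq]
  refine ⟨main, fun hneg k hk => ?_⟩
  have hden : (0:ℝ) < β * ((L + 1) * (1 - L)^2) := by positivity
  have hcoef : 1 + M + 1 / β * (L ^ 2 / (1 - L) ^ 2 - 1)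
      = (β * (2 * L ^ 3 - 3 * L ^ 2 + 1) + (2 * L ^ 2 + L - 1)) / (β * ((L + 1) * (1 - L)^2)) := by
    rw [hM]
    have h1 : L + 1 ≠ 0 := by linarith
    have h2 : (1 - L) ≠ 0 := ne_of_gt hL1'
    have h3 : β ≠ 0 := ne_of_gt hβ0
    field_simp
    ring
  have hcle : 1 / 2 * (1 + M + 1 / β * (L ^ 2 / (1 - L) ^ 2 - 1)) ≤ 0 := by
    rw [hcoef]
    have : (β * (2 * L ^ 3 - 3 * L ^ 2 + 1) + (2 * L ^ 2 + L - 1)) / (β * ((L + 1) * (1 - L)^2)) ≤ 0 :=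
      div_nonpos_of_nonpos_of_nonneg (le_of_lt hneg) (le_of_lt hden)
    linarith
  have hmain := main k hk
  have hprod : 1 / 2 * (1 + M + 1 / β * (L ^ 2 / (1 - L) ^ 2 - 1)) * ‖y (k + 1) - y k‖ ^ 2 ≤ 0 :=
    mul_nonpos_of_nonpos_of_nonneg hcle (by positivity)
  linarith
end
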